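/- arXiv:2205.13498 — 3 statements merged into one kernel-verified Lean document; each statement's English description precedes it below -/
import Mathlib

section
/- A homogeneous nontrivial linear space that is not a single line is a projective plane, i.e., every two lines intersect and the space contains four points, no three of which are collinear. -/
open Set Function

universe u v w

/-- A linear space: a set of points with a family of lines, each line having at
least 2 points, such that any two distinct points lie on a common line and any
two distinct lines meet in at most one point. -/
structure LinSpace (X : Type u) where
  lines : Set (Set X)
  two_le : ∀ L ∈ lines, 2 ≤ L.encard
  exists_line : ∀ x y : X, x ≠ y → ∃ L ∈ lines, x ∈ L ∧ y ∈ L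
  inter_subsingleton : ∀ L₁ ∈ lines, ∀ L₂ ∈ lines, L₁ ≠ L₂ → (L₁ ∩ L₂).Subsingleton

/-- Collinearity of three points. -/
def Collin {X : Type u} (A : LinSpace X) (x y z : X) : Prop :=
  ∃ L ∈ A.lines, x ∈ L ∧ y ∈ L ∧ z ∈ L

/-- An embedding of linear spaces: an injection preserving and reflecting collinearity. -/
def IsEmbedding {X : Type u} {Y : Type v} (A : LinSpace X) (B : LinSpace Y) (f : X → Y) : Prop :=
  Function.Injective f ∧ ∀ x y z : X, Collin A x y z ↔ Collin B (f x) (f y) (f z)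

/-- The linear space has degree at most `n`: every line has at most `n` points
and every point lies on at most `n` lines. -/
def DegLE {X : Type u} (A : LinSpace X) (n : ℕ) : Prop :=
  (∀ L ∈ A.lines, L.encard ≤ (n : ℕ∞)) ∧
  ∀ p : X, {L | L ∈ A.lines ∧ p ∈ L}.encard ≤ (n : ℕ∞)

/-- There exist four points, no three of which are collinear. -/
def FourIndep {X : Type u} (A : LinSpace X) : Prop :=
  ∃ a b c d : X, a ≠ b ∧ a ≠ c ∧ a ≠ d ∧ b ≠ c ∧ b ≠ d ∧ c ≠ d ∧
    ∀ p q r : X, p ∈ ({a, b, c, d} : Set X) → q ∈ ({a, b, c, d} : Set X) →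
      r ∈ ({a, b, c, d} : Set X) → p ≠ q → p ≠ r → q ≠ r → ¬ Collin A p q r

/-- A projective plane: every two lines intersect, and there are four points no
three of which are collinear. -/
def IsProjPlane {X : Type u} (A : LinSpace X) : Prop :=
  (∀ L₁ ∈ A.lines, ∀ L₂ ∈ A.lines, (L₁ ∩ L₂).Nonempty) ∧ FourIndep A

/-- An automorphism of a linear space. -/
def IsAuto {X : Type u} (A : LinSpace X) (g : X → X) : Prop :=
  Function.Bijective g ∧ ∀ x y z : X, Collin A x y z ↔ Collin A (g x) (g y) (g z)

/-- A homogeneous linear space: every isomorphism between finite subspaces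
extends to an automorphism. -/
def Homogeneous {X : Type u} (A : LinSpace X) : Prop :=
  ∀ S : Set X, S.Finite → ∀ f : X → X, Set.InjOn f S →
    (∀ x ∈ S, ∀ y ∈ S, ∀ z ∈ S, (Collin A x y z ↔ Collin A (f x) (f y) (f z))) →
    ∃ g : X → X, IsAuto A g ∧ ∀ x ∈ S, g x = f x

/-- The Fano plane: the unique projective plane of order 2 (7 points, every line
has exactly 3 points). -/
def IsFano {X : Type u} (A : LinSpace X) : Prop :=
  IsProjPlane A ∧ (∀ L ∈ A.lines, L.encard = 3) ∧ (Set.univ : Set X).encard = 7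

/-- The projective plane over F₃: the unique projective plane of order 3
(13 points, every line has exactly 4 points). -/
def IsPG2_3 {X : Type u} (A : LinSpace X) : Prop :=
  IsProjPlane A ∧ (∀ L ∈ A.lines, L.encard = 4) ∧ (Set.univ : Set X).encard = 13

/-- The planar closure of a set `S` in a linear space `B`: the closure of `S`
under adding intersection points of pairs of lines spanned by the closure. -/
inductive PlanarCl {Y : Type v} (B : LinSpace Y) (S : Set Y) : Y → Prop
  | base {p : Y} (hp : p ∈ S) : PlanarCl B S p
  | inter {p : Y} (L₁ L₂ : Set Y) (p₁ q₁ p₂ q₂ : Y)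
      (hL₁ : L₁ ∈ B.lines) (hL₂ : L₂ ∈ B.lines) (hne : L₁ ≠ L₂)
      (hpq₁ : p₁ ≠ q₁) (hp₁ : p₁ ∈ L₁) (hq₁ : q₁ ∈ L₁)
      (hpq₂ : p₂ ≠ q₂) (hp₂ : p₂ ∈ L₂) (hq₂ : q₂ ∈ L₂)
      (cp₁ : PlanarCl B S p₁) (cq₁ : PlanarCl B S q₁)
      (cp₂ : PlanarCl B S p₂) (cq₂ : PlanarCl B S q₂)
      (hpL₁ : p ∈ L₁) (hpL₂ : p ∈ L₂) : PlanarCl B S p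

/-- A planarisation: an embedding such that every point of the target lies in
the planar closure of the image (i.e. the target is obtained by successively
adding intersection points of pairs of lines). -/
def IsPlanarisation {X : Type u} {Y : Type v} (A : LinSpace X) (B : LinSpace Y) (f : X → Y) : Prop :=
  IsEmbedding A B f ∧ ∀ y : Y, PlanarCl B (Set.range f) y

/-- An aplanar embedding: any two lines of `A` whose images intersect in `B`
already intersect in `A`. -/
def IsAplanar {X : Type u} {Y : Type v} (A : LinSpace X) (B : LinSpace Y) (f : X → Y) : Prop :=
  IsEmbedding A B f ∧
  ∀ L₁ ∈ A.lines, ∀ L₂ ∈ A.lines, ∀ M₁ ∈ B.lines, ∀ M₂ ∈ B.lines,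
    f '' L₁ ⊆ M₁ → f '' L₂ ⊆ M₂ → (M₁ ∩ M₂).Nonempty → (L₁ ∩ L₂).Nonempty

/-- The induced subspace on the set `S` of points of `B` is a projective plane:
any two induced lines (lines of `B` meeting `S` in at least two points) meet
inside `S`, and `S` contains four points no three collinear. -/
def IsProjPlaneOn {Y : Type v} (B : LinSpace Y) (S : Set Y) : Prop :=
  (∀ L₁ ∈ B.lines, ∀ L₂ ∈ B.lines,
      2 ≤ (L₁ ∩ S).encard → 2 ≤ (L₂ ∩ S).encard → (L₁ ∩ L₂ ∩ S).Nonempty) ∧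
  ∃ a b c d : Y, a ∈ S ∧ b ∈ S ∧ c ∈ S ∧ d ∈ S ∧
    a ≠ b ∧ a ≠ c ∧ a ≠ d ∧ b ≠ c ∧ b ≠ d ∧ c ≠ d ∧
    ∀ p q r : Y, p ∈ ({a, b, c, d} : Set Y) → q ∈ ({a, b, c, d} : Set Y) →
      r ∈ ({a, b, c, d} : Set Y) → p ≠ q → p ≠ r → q ≠ r → ¬ Collin B p q r

section AuxStmt3

variable {X : Type u}

theorem LinSpace.line_unique (A : LinSpace X) {L M : Set X} (hL : L ∈ A.lines)
    (hM : M ∈ A.lines) {a b : X} (haL : a ∈ L) (hbL : b ∈ L) (haM : a ∈ M) (hbM : b ∈ M)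
    (hab : a ≠ b) : L = M := by
  by_contra h
  exact hab (A.inter_subsingleton L hL M hM h ⟨haL, haM⟩ ⟨hbL, hbM⟩)

theorem LinSpace.exists_pair (A : LinSpace X) {L : Set X} (hL : L ∈ A.lines) :
    ∃ a ∈ L, ∃ b ∈ L, a ≠ b := by
  obtain ⟨a, b, ha, hb, hab⟩ :=
    Set.one_lt_encard_iff.mp (((by norm_num : (1:ℕ∞) < 2)).trans_le (A.two_le L hL))
  exact ⟨a, ha, b, hb, hab⟩

theorem LinSpace.mem_line (A : LinSpace X) (hne : ∃ L, L ∈ A.lines) (x : X) :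
    ∃ L ∈ A.lines, x ∈ L := by
  obtain ⟨L, hL⟩ := hne
  obtain ⟨w, hw, -⟩ := A.exists_pair hL
  by_cases hxw : x = w
  · exact ⟨L, hL, hxw ▸ hw⟩
  · obtain ⟨M, hM, hxM, _⟩ := A.exists_line x w hxw
    exact ⟨M, hM, hxM⟩

theorem LinSpace.collin_degen (A : LinSpace X) (hne : ∃ L, L ∈ A.lines) {x y z : X}
    (h : x = y ∨ x = z ∨ y = z) : Collin A x y z := by
  by_cases hxy : x = y
  · subst hxy
    by_cases hxz : x = z
    · subst hxz
      obtain ⟨L, hL, hx⟩ := A.mem_line hne x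
      exact ⟨L, hL, hx, hx, hx⟩
    · obtain ⟨L, hL, hx, hz⟩ := A.exists_line x z hxz
      exact ⟨L, hL, hx, hx, hz⟩
  · rcases h with h | h | h
    · exact absurd h hxy
    · subst h
      obtain ⟨L, hL, hx, hy⟩ := A.exists_line x y hxy
      exact ⟨L, hL, hx, hy, hx⟩
    · subst h
      obtain ⟨L, hL, hx, hy⟩ := A.exists_line x y hxy
      exact ⟨L, hL, hx, hy, hy⟩

/-- Homogeneity gives 2-transitivity. -/
theorem LinSpace.two_trans (A : LinSpace X) (hhom : Homogeneous A) (hne : ∃ L, L ∈ A.lines)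
    {a b c d : X} (hab : a ≠ b) (hcd : c ≠ d) :
    ∃ g : X → X, IsAuto A g ∧ g a = c ∧ g b = d := by
  classical
  set f : X → X := fun x => if x = a then c else d with hfdef
  have hfa : f a = c := if_pos rfl
  have hfb : f b = d := if_neg hab.symm
  have hS : ({a, b} : Set X).Finite := (Set.finite_singleton b).insert a
  have hinj : Set.InjOn f ({a, b} : Set X) := by
    intro x hx y hy hxy
    simp only [Set.mem_insert_iff, Set.mem_singleton_iff] at hx hy
    rcases hx with rfl | rfl <;> rcases hy with rfl | rfl
    · rfl
    · rw [hfa, hfb] at hxy; exact absurd hxy hcd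
    · rw [hfa, hfb] at hxy; exact absurd hxy.symm hcd
    · rfl
  have hcoll : ∀ x ∈ ({a, b} : Set X), ∀ y ∈ ({a, b} : Set X), ∀ z ∈ ({a, b} : Set X),
      (Collin A x y z ↔ Collin A (f x) (f y) (f z)) := by
    intro x hx y hy z hz
    simp only [Set.mem_insert_iff, Set.mem_singleton_iff] at hx hy hz
    have hrep : x = y ∨ x = z ∨ y = z := by
      rcases hx with rfl | rfl <;> rcases hy with rfl | rfl <;>
        rcases hz with rfl | rfl <;> simp
    have hrep' : f x = f y ∨ f x = f z ∨ f y = f z := by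
      rcases hrep with rfl | rfl | rfl <;> simp
    exact iff_of_true (A.collin_degen hne hrep) (A.collin_degen hne hrep')
  obtain ⟨g, hg, hgS⟩ := hhom {a, b} hS f hinj hcoll
  exact ⟨g, hg, (hgS a (by simp)).trans hfa, (hgS b (by simp)).trans hfb⟩

/-- In a homogeneous nontrivial linear space, every line has at least 3 points. -/
theorem LinSpace.three_le (A : LinSpace X) (hhom : Homogeneous A)
    (hnontriv : ¬ ∀ L ∈ A.lines, L.encard = 2) :
    ∀ L ∈ A.lines, 3 ≤ L.encard := by
  push_neg at hnontriv
  obtain ⟨L₀, hL₀, hL₀2⟩ := hnontriv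
  have hne : ∃ L, L ∈ A.lines := ⟨L₀, hL₀⟩
  have h3 : 3 ≤ L₀.encard := by
    have h2 : (2 : ℕ∞) < L₀.encard := lt_of_le_of_ne (A.two_le L₀ hL₀) (Ne.symm hL₀2)
    exact Order.add_one_le_of_lt h2
  intro L hL
  obtain ⟨p, hp, q, hq, hpq⟩ := A.exists_pair hL₀
  obtain ⟨a, ha, b, hb, hab⟩ := A.exists_pair hL
  obtain ⟨g, hg, hga, hgb⟩ := A.two_trans hhom hne hpq hab
  have himg : g '' L₀ ⊆ L := by
    rintro _ ⟨z, hz, rfl⟩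
    have h1 : Collin A p q z := ⟨L₀, hL₀, hp, hq, hz⟩
    have h2' := (hg.2 p q z).mp h1
    rw [hga, hgb] at h2'
    obtain ⟨M, hM, haM, hbM, hzM⟩ := h2'
    have : L = M := A.line_unique hL hM ha hb haM hbM hab
    rw [this]; exact hzM
  calc (3 : ℕ∞) ≤ L₀.encard := h3
    _ = (g '' L₀).encard := (Set.InjOn.encard_image (hg.1.1.injOn)).symm
    _ ≤ L.encard := Set.encard_le_encard himg

/-- Two points on a line avoiding a given point. -/
theorem LinSpace.two_off (A : LinSpace X) {L : Set X} (h3 : 3 ≤ L.encard) (u : X) :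
    ∃ a ∈ L, ∃ b ∈ L, a ≠ b ∧ a ≠ u ∧ b ≠ u := by
  have hle : L.encard ≤ (L \ {u}).encard + 1 := by
    by_cases hu : u ∈ L
    · rw [Set.encard_diff_singleton_add_one hu]
    · rw [Set.diff_singleton_eq_self (by simpa using hu)]
      exact le_self_add
  have h2 : 1 < (L \ {u}).encard := by
    by_contra hc
    push_neg at hc
    have h2' : L.encard ≤ 2 := hle.trans (by
      calc (L \ {u}).encard + 1 ≤ 1 + 1 := add_le_add hc le_rfl
        _ = 2 := by norm_num)
    exact absurd (h3.trans h2') (by norm_num)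
  obtain ⟨a, b, ha, hb, hab⟩ := Set.one_lt_encard_iff.mp h2
  exact ⟨a, ha.1, b, hb.1, hab, by simpa using ha.2, by simpa using hb.2⟩

/-- Two points on each of two nonmutually-incident lines form an independent 4-set. -/
theorem LinSpace.quad_indep (A : LinSpace X) {L₁ L₂ : Set X} (hL₁ : L₁ ∈ A.lines)
    (hL₂ : L₂ ∈ A.lines) (hne : L₁ ≠ L₂) {a b c d : X}
    (ha : a ∈ L₁) (hb : b ∈ L₁) (hc : c ∈ L₂) (hd : d ∈ L₂)
    (hab : a ≠ b) (hcd : c ≠ d)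
    (ha2 : a ∉ L₂) (hb2 : b ∉ L₂) (hc1 : c ∉ L₁) (hd1 : d ∉ L₁) :
    a ≠ c ∧ a ≠ d ∧ b ≠ c ∧ b ≠ d ∧
    ∀ p q r : X, p ∈ ({a, b, c, d} : Set X) → q ∈ ({a, b, c, d} : Set X) →
      r ∈ ({a, b, c, d} : Set X) → p ≠ q → p ≠ r → q ≠ r → ¬ Collin A p q r := by
  refine ⟨by rintro rfl; exact ha2 hc, by rintro rfl; exact ha2 hd,
    by rintro rfl; exact hb2 hc, by rintro rfl; exact hb2 hd, ?_⟩
  rintro p q r hp hq hr hpq hpr hqr ⟨M, hM, hpM, hqM, hrM⟩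
  simp only [Set.mem_insert_iff, Set.mem_singleton_iff] at hp hq hr
  by_cases hM1 : M = L₁
  · subst hM1
    have hp' : p = a ∨ p = b := by
      rcases hp with rfl | rfl | rfl | rfl
      · exact Or.inl rfl
      · exact Or.inr rfl
      · exact absurd hpM hc1
      · exact absurd hpM hd1
    have hq' : q = a ∨ q = b := by
      rcases hq with rfl | rfl | rfl | rfl
      · exact Or.inl rfl
      · exact Or.inr rfl
      · exact absurd hqM hc1
      · exact absurd hqM hd1
    have hr' : r = a ∨ r = b := by
      rcases hr with rfl | rfl | rfl | rfl
      · exact Or.inl rfl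
      · exact Or.inr rfl
      · exact absurd hrM hc1
      · exact absurd hrM hd1
    rcases hp' with rfl | rfl <;> rcases hq' with rfl | rfl <;> rcases hr' with rfl | rfl <;>
      first | exact hpq rfl | exact hpr rfl | exact hqr rfl
  · by_cases hM2 : M = L₂
    · subst hM2
      have hp' : p = c ∨ p = d := by
        rcases hp with rfl | rfl | rfl | rfl
        · exact absurd hpM ha2
        · exact absurd hpM hb2
        · exact Or.inl rfl
        · exact Or.inr rfl
      have hq' : q = c ∨ q = d := by
        rcases hq with rfl | rfl | rfl | rfl
        · exact absurd hqM ha2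
        · exact absurd hqM hb2
        · exact Or.inl rfl
        · exact Or.inr rfl
      have hr' : r = c ∨ r = d := by
        rcases hr with rfl | rfl | rfl | rfl
        · exact absurd hrM ha2
        · exact absurd hrM hb2
        · exact Or.inl rfl
        · exact Or.inr rfl
      rcases hp' with rfl | rfl <;> rcases hq' with rfl | rfl <;> rcases hr' with rfl | rfl <;>
        first | exact hpq rfl | exact hpr rfl | exact hqr rfl
    · have hS1 := A.inter_subsingleton M hM L₁ hL₁ hM1
      have hS2 := A.inter_subsingleton M hM L₂ hL₂ hM2
      have hp2 : p ∈ M ∩ L₁ ∨ p ∈ M ∩ L₂ := by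
        rcases hp with rfl | rfl | rfl | rfl
        exacts [Or.inl ⟨hpM, ha⟩, Or.inl ⟨hpM, hb⟩, Or.inr ⟨hpM, hc⟩, Or.inr ⟨hpM, hd⟩]
      have hq2 : q ∈ M ∩ L₁ ∨ q ∈ M ∩ L₂ := by
        rcases hq with rfl | rfl | rfl | rfl
        exacts [Or.inl ⟨hqM, ha⟩, Or.inl ⟨hqM, hb⟩, Or.inr ⟨hqM, hc⟩, Or.inr ⟨hqM, hd⟩]
      have hr2 : r ∈ M ∩ L₁ ∨ r ∈ M ∩ L₂ := by
        rcases hr with rfl | rfl | rfl | rfl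
        exacts [Or.inl ⟨hrM, ha⟩, Or.inl ⟨hrM, hb⟩, Or.inr ⟨hrM, hc⟩, Or.inr ⟨hrM, hd⟩]
      rcases hp2 with h1 | h1 <;> rcases hq2 with h2 | h2 <;> rcases hr2 with h3 | h3 <;>
        first
          | exact hpq (hS1 h1 h2)
          | exact hpq (hS2 h1 h2)
          | exact hpr (hS1 h1 h3)
          | exact hpr (hS2 h1 h3)
          | exact hqr (hS1 h2 h3)
          | exact hqr (hS2 h2 h3)

end AuxStmt3

/-- A homogeneous nontrivial linear space that is not a single line is a
projective plane. -/
theorem stmt3 {X : Type u} (A : LinSpace X) (hhom : Homogeneous A)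
    (hnontriv : ¬ ∀ L ∈ A.lines, L.encard = 2)
    (hnotline : ¬ ∀ x y z : X, Collin A x y z) :
    IsProjPlane A := by
  classical
  push_neg at hnotline
  obtain ⟨u, v, w, huvw⟩ := hnotline
  have hnontriv' := hnontriv
  push_neg at hnontriv'
  obtain ⟨L₀, hL₀, -⟩ := hnontriv'
  have hex : ∃ L, L ∈ A.lines := ⟨L₀, hL₀⟩
  have h3 := A.three_le hhom hnontriv
  have huv : u ≠ v := by
    rintro rfl; exact huvw (A.collin_degen hex (Or.inl rfl))
  have huw : u ≠ w := by
    rintro rfl; exact huvw (A.collin_degen hex (Or.inr (Or.inl rfl)))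
  obtain ⟨L₁, hL₁, huL₁, hvL₁⟩ := A.exists_line u v huv
  obtain ⟨L₂, hL₂, huL₂, hwL₂⟩ := A.exists_line u w huw
  have hL₁₂ : L₁ ≠ L₂ := by
    rintro rfl; exact huvw ⟨L₁, hL₁, huL₁, hvL₁, hwL₂⟩
  have hSub := A.inter_subsingleton L₁ hL₁ L₂ hL₂ hL₁₂
  obtain ⟨a, haL₁, b, hbL₁, hab, hau, hbu⟩ := A.two_off (h3 L₁ hL₁) u
  obtain ⟨c, hcL₂, d, hdL₂, hcd, hcu, hdu⟩ := A.two_off (h3 L₂ hL₂) u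
  have ha2 : a ∉ L₂ := fun h => hau (hSub ⟨haL₁, h⟩ ⟨huL₁, huL₂⟩)
  have hb2 : b ∉ L₂ := fun h => hbu (hSub ⟨hbL₁, h⟩ ⟨huL₁, huL₂⟩)
  have hc1 : c ∉ L₁ := fun h => hcu (hSub ⟨h, hcL₂⟩ ⟨huL₁, huL₂⟩)
  have hd1 : d ∉ L₁ := fun h => hdu (hSub ⟨h, hdL₂⟩ ⟨huL₁, huL₂⟩)
  obtain ⟨hac, had, hbc, hbd, hquad⟩ :=
    A.quad_indep hL₁ hL₂ hL₁₂ haL₁ hbL₁ hcL₂ hdL₂ hab hcd ha2 hb2 hc1 hd1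
  constructor
  · -- any two lines meet
    intro M₁ hM₁ M₂ hM₂
    by_cases hMeq : M₁ = M₂
    · subst hMeq
      obtain ⟨p, hp, -⟩ := A.exists_pair hM₁
      exact ⟨p, hp, hp⟩
    by_contra hempty
    rw [Set.not_nonempty_iff_eq_empty, Set.eq_empty_iff_forall_notMem] at hempty
    obtain ⟨p, hpM, q, hqM, hpq⟩ := A.exists_pair hM₁
    obtain ⟨r, hrM, s, hsM, hrs⟩ := A.exists_pair hM₂
    have hp2 : p ∉ M₂ := fun h => hempty p ⟨hpM, h⟩
    have hq2 : q ∉ M₂ := fun h => hempty q ⟨hqM, h⟩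
    have hr1 : r ∉ M₁ := fun h => hempty r ⟨h, hrM⟩
    have hs1 : s ∉ M₁ := fun h => hempty s ⟨h, hsM⟩
    obtain ⟨hpr, hps, hqr, hqs, hquad'⟩ :=
      A.quad_indep hM₁ hM₂ hMeq hpM hqM hrM hsM hpq hrs hp2 hq2 hr1 hs1
    set f : X → X := fun x => if x = a then p else if x = b then q else if x = c then r else s
      with hfdef
    have hfa : f a = p := by simp [hfdef]
    have hfb : f b = q := by simp [hfdef, hab.symm]
    have hfc : f c = r := by simp [hfdef, hac.symm, hbc.symm]
    have hfd : f d = s := by simp [hfdef, had.symm, hbd.symm, hcd.symm]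
    have hinj : Set.InjOn f ({a, b, c, d} : Set X) := by
      intro x hx y hy hxy
      simp only [Set.mem_insert_iff, Set.mem_singleton_iff] at hx hy
      rcases hx with rfl | rfl | rfl | rfl <;> rcases hy with rfl | rfl | rfl | rfl <;>
        simp only [hfa, hfb, hfc, hfd] at hxy <;>
        first
          | rfl
          | exact absurd hxy hpq
          | exact absurd hxy.symm hpq
          | exact absurd hxy hpr
          | exact absurd hxy.symm hpr
          | exact absurd hxy hps
          | exact absurd hxy.symm hps
          | exact absurd hxy hqr
          | exact absurd hxy.symm hqr
          | exact absurd hxy hqs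
          | exact absurd hxy.symm hqs
          | exact absurd hxy hrs
          | exact absurd hxy.symm hrs
    have hmem : ∀ x ∈ ({a, b, c, d} : Set X), f x ∈ ({p, q, r, s} : Set X) := by
      intro x hx
      simp only [Set.mem_insert_iff, Set.mem_singleton_iff] at hx ⊢
      rcases hx with rfl | rfl | rfl | rfl <;> simp [hfa, hfb, hfc, hfd]
    have hcoll : ∀ x ∈ ({a, b, c, d} : Set X), ∀ y ∈ ({a, b, c, d} : Set X),
        ∀ z ∈ ({a, b, c, d} : Set X), (Collin A x y z ↔ Collin A (f x) (f y) (f z)) := by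
      intro x hx y hy z hz
      by_cases hrep : x = y ∨ x = z ∨ y = z
      · have hrep' : f x = f y ∨ f x = f z ∨ f y = f z := by
          rcases hrep with rfl | rfl | rfl <;> simp
        exact iff_of_true (A.collin_degen hex hrep) (A.collin_degen hex hrep')
      · push_neg at hrep
        obtain ⟨hxy, hxz, hyz⟩ := hrep
        exact iff_of_false (hquad x y z hx hy hz hxy hxz hyz)
          (hquad' _ _ _ (hmem x hx) (hmem y hy) (hmem z hz)
            (fun h => hxy (hinj hx hy h)) (fun h => hxz (hinj hx hz h))
            (fun h => hyz (hinj hy hz h)))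
    have hSfin : ({a, b, c, d} : Set X).Finite :=
      (((Set.finite_singleton d).insert c).insert b).insert a
    obtain ⟨g, hg, hgS⟩ := hhom {a, b, c, d} hSfin f hinj hcoll
    have hga : g a = p := (hgS a (by simp)).trans hfa
    have hgb : g b = q := (hgS b (by simp)).trans hfb
    have hgc : g c = r := (hgS c (by simp)).trans hfc
    have hgd : g d = s := (hgS d (by simp)).trans hfd
    have h1 : Collin A a b u := ⟨L₁, hL₁, haL₁, hbL₁, huL₁⟩
    have h2 : Collin A c d u := ⟨L₂, hL₂, hcL₂, hdL₂, huL₂⟩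
    have h1' := (hg.2 a b u).mp h1
    have h2' := (hg.2 c d u).mp h2
    rw [hga, hgb] at h1'
    rw [hgc, hgd] at h2'
    obtain ⟨N₁, hN₁, hpN₁, hqN₁, hguN₁⟩ := h1'
    obtain ⟨N₂, hN₂, hrN₂, hsN₂, hguN₂⟩ := h2'
    have he1 : M₁ = N₁ := A.line_unique hM₁ hN₁ hpM hqM hpN₁ hqN₁ hpq
    have he2 : M₂ = N₂ := A.line_unique hM₂ hN₂ hrM hsM hrN₂ hsN₂ hrs
    exact hempty (g u) ⟨he1 ▸ hguN₁, he2 ▸ hguN₂⟩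
  · exact ⟨a, b, c, d, hab, hac, had, hbc, hbd, hcd, hquad⟩
end

section
/- A homogeneous projective plane has degree at most 4; in particular it is finite. -/
open Set Function

universe u v w

namespace Stmt4Aux

variable {X : Type u} (A : LinSpace X)

theorem line_eq_of_two {L₁ L₂ : Set X} (h₁ : L₁ ∈ A.lines) (h₂ : L₂ ∈ A.lines)
    {p q : X} (hpq : p ≠ q) (hp₁ : p ∈ L₁) (hq₁ : q ∈ L₁) (hp₂ : p ∈ L₂) (hq₂ : q ∈ L₂) :
    L₁ = L₂ := by
  by_contra hne
  exact hpq (A.inter_subsingleton L₁ h₁ L₂ h₂ hne ⟨hp₁, hp₂⟩ ⟨hq₁, hq₂⟩)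

open Classical in
noncomputable def lineThru (x y : X) : Set X :=
  if h : x ≠ y then (A.exists_line x y h).choose else ∅

theorem lineThru_spec {x y : X} (h : x ≠ y) :
    lineThru A x y ∈ A.lines ∧ x ∈ lineThru A x y ∧ y ∈ lineThru A x y := by
  have := (A.exists_line x y h).choose_spec
  simp only [lineThru, dif_pos h]
  exact ⟨this.1, this.2.1, this.2.2⟩

theorem lineThru_mem {x y : X} (h : x ≠ y) : lineThru A x y ∈ A.lines := (lineThru_spec A h).1
theorem left_mem_lineThru {x y : X} (h : x ≠ y) : x ∈ lineThru A x y := (lineThru_spec A h).2.1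
theorem right_mem_lineThru {x y : X} (h : x ≠ y) : y ∈ lineThru A x y := (lineThru_spec A h).2.2

theorem eq_lineThru {L : Set X} (hL : L ∈ A.lines) {x y : X} (h : x ≠ y)
    (hx : x ∈ L) (hy : y ∈ L) : L = lineThru A x y :=
  line_eq_of_two A hL (lineThru_mem A h) h hx hy (left_mem_lineThru A h) (right_mem_lineThru A h)

theorem collin_iff_mem {x y z : X} (h : x ≠ y) :
    Collin A x y z ↔ z ∈ lineThru A x y := by
  constructor
  · rintro ⟨L, hL, hx, hy, hz⟩
    rw [← eq_lineThru A hL h hx hy] at *; exact hz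
  · intro hz
    exact ⟨lineThru A x y, lineThru_mem A h, left_mem_lineThru A h, right_mem_lineThru A h, hz⟩

/-- If `u v` are distinct points of a line `L` and `w ∉ L` then `u,v,w` are not collinear
(in any order). Stated for the three positions of `w`. -/
theorem not_collin₃ {L : Set X} (hL : L ∈ A.lines) {u v w : X} (hu : u ∈ L) (hv : v ∈ L)
    (huv : u ≠ v) (hw : w ∉ L) : ¬ Collin A u v w := by
  rintro ⟨N, hN, h1, h2, h3⟩
  rw [line_eq_of_two A hN hL huv h1 h2 hu hv] at h3
  exact hw h3

theorem collin_of_line {L : Set X} (hL : L ∈ A.lines) {u v w : X}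
    (hu : u ∈ L) (hv : v ∈ L) (hw : w ∈ L) : Collin A u v w := ⟨L, hL, hu, hv, hw⟩

theorem collin_of_eq (hX : ∃ u v : X, u ≠ v) {z₁ z₂ z₃ : X}
    (h : z₁ = z₂ ∨ z₁ = z₃ ∨ z₂ = z₃) : Collin A z₁ z₂ z₃ := by
  have key : ∀ a b : X, Collin A a a b := by
    intro a b
    rcases eq_or_ne a b with rfl | hab
    · obtain ⟨u, v, huv⟩ := hX
      rcases eq_or_ne a u with rfl | hau
      · exact ⟨lineThru A a v, lineThru_mem A huv, left_mem_lineThru A huv,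
          left_mem_lineThru A huv, left_mem_lineThru A huv⟩
      · exact ⟨lineThru A a u, lineThru_mem A hau, left_mem_lineThru A hau,
          left_mem_lineThru A hau, left_mem_lineThru A hau⟩
    · exact ⟨lineThru A a b, lineThru_mem A hab, left_mem_lineThru A hab,
        left_mem_lineThru A hab, right_mem_lineThru A hab⟩
  rcases h with rfl | rfl | rfl
  · exact key z₁ z₃
  · obtain ⟨L, hL, h1, h2, h3⟩ := key z₁ z₂
    exact ⟨L, hL, h1, h3, h1⟩
  · obtain ⟨L, hL, h1, h2, h3⟩ := key z₂ z₁
    exact ⟨L, hL, h3, h1, h1⟩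

/-- Characterization of collinearity for points each lying on one of two lines. -/
theorem collin_char (hX : ∃ u v : X, u ≠ v) {M L : Set X} (hM : M ∈ A.lines) (hL : L ∈ A.lines)
    {z₁ z₂ z₃ : X} (h1 : z₁ ∈ M ∨ z₁ ∈ L) (h2 : z₂ ∈ M ∨ z₂ ∈ L) (h3 : z₃ ∈ M ∨ z₃ ∈ L) :
    Collin A z₁ z₂ z₃ ↔ (z₁ = z₂ ∨ z₁ = z₃ ∨ z₂ = z₃) ∨
      (z₁ ∈ M ∧ z₂ ∈ M ∧ z₃ ∈ M) ∨ (z₁ ∈ L ∧ z₂ ∈ L ∧ z₃ ∈ L) := by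
  constructor
  · intro hc
    by_cases hd : z₁ = z₂ ∨ z₁ = z₃ ∨ z₂ = z₃
    · exact Or.inl hd
    push_neg at hd
    obtain ⟨N, hN, hn1, hn2, hn3⟩ := hc
    have key : ∀ K, K ∈ A.lines → ∀ u v : X, u ∈ K → v ∈ K → u ≠ v → u ∈ N → v ∈ N → N = K :=
      fun K hK u v hu hv huv hun hvn => line_eq_of_two A hN hK huv hun hvn hu hv
    have done : N = M ∨ N = L := by
      rcases h1 with p1 | p1 <;> rcases h2 with p2 | p2 <;> rcases h3 with p3 | p3
      · exact Or.inl (key M hM z₁ z₂ p1 p2 hd.1 hn1 hn2)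
      · exact Or.inl (key M hM z₁ z₂ p1 p2 hd.1 hn1 hn2)
      · exact Or.inl (key M hM z₁ z₃ p1 p3 hd.2.1 hn1 hn3)
      · exact Or.inr (key L hL z₂ z₃ p2 p3 hd.2.2 hn2 hn3)
      · exact Or.inl (key M hM z₂ z₃ p2 p3 hd.2.2 hn2 hn3)
      · exact Or.inr (key L hL z₁ z₃ p1 p3 hd.2.1 hn1 hn3)
      · exact Or.inr (key L hL z₁ z₂ p1 p2 hd.1 hn1 hn2)
      · exact Or.inr (key L hL z₁ z₂ p1 p2 hd.1 hn1 hn2)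
    rcases done with rfl | rfl
    · exact Or.inr (Or.inl ⟨hn1, hn2, hn3⟩)
    · exact Or.inr (Or.inr ⟨hn1, hn2, hn3⟩)
  · rintro (hd | ⟨p1, p2, p3⟩ | ⟨p1, p2, p3⟩)
    · exact collin_of_eq A hX hd
    · exact ⟨M, hM, p1, p2, p3⟩
    · exact ⟨L, hL, p1, p2, p3⟩

theorem auto_mem_lineThru {g : X → X} (hg : IsAuto A g) {u v : X} (huv : u ≠ v)
    (hu : g u = u) (hv : g v = v) {w : X} (hw : w ∈ lineThru A u v) :
    g w ∈ lineThru A u v := by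
  have h1 : Collin A u v w := (collin_iff_mem A huv).mpr hw
  have h2 : Collin A (g u) (g v) (g w) := (hg.2 u v w).mp h1
  rw [hu, hv] at h2
  exact (collin_iff_mem A huv).mp h2

/-- Given a quadrangle, no three of the four points are collinear in any order. -/
theorem exists_off_line (hproj : IsProjPlane A) {L : Set X} (hL : L ∈ A.lines) :
    ∃ u : X, u ∉ L := by
  obtain ⟨a, b, c, d, hab, hac, had, hbc, hbd, hcd, H⟩ := hproj.2
  by_contra h
  push_neg at h
  exact H a b c (by simp) (by simp) (by simp) hab hac hbc ⟨L, hL, h a, h b, h c⟩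

theorem three_points (hproj : IsProjPlane A) {L : Set X} (hL : L ∈ A.lines) :
    ∃ p₁ p₂ p₃ : X, p₁ ∈ L ∧ p₂ ∈ L ∧ p₃ ∈ L ∧ p₁ ≠ p₂ ∧ p₁ ≠ p₃ ∧ p₂ ≠ p₃ := by
  obtain ⟨a, b, c, d, hab, hac, had, hbc, hbd, hcd, H⟩ := hproj.2
  -- an auxiliary: given a vertex r off L and three others s₁ s₂ s₃ no three collinear with r
  have aux : ∀ r s₁ s₂ s₃ : X, r ∉ L → r ≠ s₁ → r ≠ s₂ → r ≠ s₃ →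
      ¬ Collin A r s₁ s₂ → ¬ Collin A r s₁ s₃ → ¬ Collin A r s₂ s₃ →
      ∃ p₁ p₂ p₃ : X, p₁ ∈ L ∧ p₂ ∈ L ∧ p₃ ∈ L ∧ p₁ ≠ p₂ ∧ p₁ ≠ p₃ ∧ p₂ ≠ p₃ := by
    intro r s₁ s₂ s₃ hr h1 h2 h3 hc12 hc13 hc23
    have hmeet : ∀ s : X, r ≠ s → ∃ p, p ∈ lineThru A r s ∩ L :=
      fun s hs => hproj.1 _ (lineThru_mem A hs) L hL
    obtain ⟨p₁, hp₁⟩ := hmeet s₁ h1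
    obtain ⟨p₂, hp₂⟩ := hmeet s₂ h2
    obtain ⟨p₃, hp₃⟩ := hmeet s₃ h3
    have hdist : ∀ s s' : X, (hs : r ≠ s) → (hs' : r ≠ s') → ¬ Collin A r s s' →
        ∀ p p' : X, p ∈ lineThru A r s ∩ L → p' ∈ lineThru A r s' ∩ L → p ≠ p' := by
      intro s s' hs hs' hcss p p' hp hp' heq
      subst heq
      have hlines : lineThru A r s ≠ lineThru A r s' := by
        intro h
        exact hcss ((collin_iff_mem A hs).mpr (h ▸ right_mem_lineThru A hs'))
      have := A.inter_subsingleton _ (lineThru_mem A hs) _ (lineThru_mem A hs') hlines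
        ⟨hp.1, hp'.1⟩ ⟨left_mem_lineThru A hs, left_mem_lineThru A hs'⟩
      rw [this] at hp
      exact hr hp.2
    exact ⟨p₁, p₂, p₃, hp₁.2, hp₂.2, hp₃.2,
      hdist s₁ s₂ h1 h2 hc12 p₁ p₂ hp₁ hp₂,
      hdist s₁ s₃ h1 h3 hc13 p₁ p₃ hp₁ hp₃,
      hdist s₂ s₃ h2 h3 hc23 p₂ p₃ hp₂ hp₃⟩
  by_cases ha : a ∉ L
  · exact aux a b c d ha hab hac had
      (H a b c (by simp) (by simp) (by simp) hab hac hbc)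
      (H a b d (by simp) (by simp) (by simp) hab had hbd)
      (H a c d (by simp) (by simp) (by simp) hac had hcd)
  by_cases hb : b ∉ L
  · exact aux b a c d hb (Ne.symm hab) hbc hbd
      (H b a c (by simp) (by simp) (by simp) (Ne.symm hab) hbc hac)
      (H b a d (by simp) (by simp) (by simp) (Ne.symm hab) hbd had)
      (H b c d (by simp) (by simp) (by simp) hbc hbd hcd)
  by_cases hc : c ∉ L
  · exact aux c a b d hc (Ne.symm hac) (Ne.symm hbc) hcd
      (H c a b (by simp) (by simp) (by simp) (Ne.symm hac) (Ne.symm hbc) hab)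
      (H c a d (by simp) (by simp) (by simp) (Ne.symm hac) hcd had)
      (H c b d (by simp) (by simp) (by simp) (Ne.symm hbc) hcd hbd)
  push_neg at ha hb hc
  exact absurd ⟨L, hL, ha, hb, hc⟩ (H a b c (by simp) (by simp) (by simp) hab hac hbc)

theorem third_point (hproj : IsProjPlane A) {L : Set X} (hL : L ∈ A.lines) (z c : X) :
    ∃ u ∈ L, u ≠ z ∧ u ≠ c := by
  obtain ⟨p₁, p₂, p₃, m1, m2, m3, d12, d13, d23⟩ := three_points A hproj hL
  by_cases h1 : p₁ ≠ z ∧ p₁ ≠ c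
  · exact ⟨p₁, m1, h1⟩
  by_cases h2 : p₂ ≠ z ∧ p₂ ≠ c
  · exact ⟨p₂, m2, h2⟩
  by_cases h3 : p₃ ≠ z ∧ p₃ ≠ c
  · exact ⟨p₃, m3, h3⟩
  exfalso
  push_neg at h1 h2 h3
  -- each of p₁ p₂ p₃ lies in {z, c}: contradiction with pairwise distinctness
  have e1 : p₁ = z ∨ p₁ = c := by by_cases h : p₁ = z; exact Or.inl h; exact Or.inr (h1 h)
  have e2 : p₂ = z ∨ p₂ = c := by by_cases h : p₂ = z; exact Or.inl h; exact Or.inr (h2 h)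
  have e3 : p₃ = z ∨ p₃ = c := by by_cases h : p₃ = z; exact Or.inl h; exact Or.inr (h3 h)
  rcases e1 with h | h <;> rcases e2 with h' | h' <;> rcases e3 with h'' | h'' <;>
    first
      | exact d12 (h.trans h'.symm)
      | exact d13 (h.trans h''.symm)
      | exact d23 (h'.trans h''.symm)

theorem exists_off_two (hproj : IsProjPlane A) {L M : Set X}
    (hL : L ∈ A.lines) (hM : M ∈ A.lines) : ∃ u : X, u ∉ L ∧ u ∉ M := by
  rcases eq_or_ne L M with rfl | hne
  · obtain ⟨u, hu⟩ := exists_off_line A hproj hL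
    exact ⟨u, hu, hu⟩
  -- find z ∈ L \ M
  have hsub := A.inter_subsingleton L hL M hM hne
  obtain ⟨z₁, z₂, z₃, hz₁, hz₂, _, h12, _, _⟩ := three_points A hproj hL
  have hz : ∃ z ∈ L, z ∉ M := by
    by_cases h : z₁ ∈ M
    · by_cases h' : z₂ ∈ M
      · exact absurd (hsub ⟨hz₁, h⟩ ⟨hz₂, h'⟩) h12
      · exact ⟨z₂, hz₂, h'⟩
    · exact ⟨z₁, hz₁, h⟩
  obtain ⟨z, hzL, hzM⟩ := hz
  have hsub' := A.inter_subsingleton M hM L hL (Ne.symm hne)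
  obtain ⟨w₁, w₂, w₃, hw₁, hw₂, _, h12', _, _⟩ := three_points A hproj hM
  have hw : ∃ w ∈ M, w ∉ L := by
    by_cases h : w₁ ∈ L
    · by_cases h' : w₂ ∈ L
      · exact absurd (hsub' ⟨hw₁, h⟩ ⟨hw₂, h'⟩) h12'
      · exact ⟨w₂, hw₂, h'⟩
    · exact ⟨w₁, hw₁, h⟩
  obtain ⟨w, hwM, hwL⟩ := hw
  have hzw : z ≠ w := fun h => hzM (h ▸ hwM)
  obtain ⟨u, huN, huz, huw⟩ := third_point A hproj (lineThru_mem A hzw) z w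
  refine ⟨u, fun huL => ?_, fun huM => ?_⟩
  · have hNL : lineThru A z w ≠ L := fun h => hwL (h ▸ right_mem_lineThru A hzw)
    exact huz (A.inter_subsingleton _ (lineThru_mem A hzw) L hL hNL
      ⟨huN, huL⟩ ⟨left_mem_lineThru A hzw, hzL⟩)
  · have hNM : lineThru A z w ≠ M := fun h => hzM (h ▸ left_mem_lineThru A hzw)
    exact huw (A.inter_subsingleton _ (lineThru_mem A hzw) M hM hNM
      ⟨huN, huM⟩ ⟨right_mem_lineThru A hzw, hwM⟩)

theorem encard_line_le (hproj : IsProjPlane A) {L M : Set X}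
    (hL : L ∈ A.lines) (hM : M ∈ A.lines) (hne : L ≠ M) : L.encard ≤ M.encard := by
  obtain ⟨u, huL, huM⟩ := exists_off_two A hproj hL hM
  have hfun : ∀ w ∈ L, ∃ p, p ∈ M ∧ p ∈ lineThru A u w := by
    intro w hw
    have huw : u ≠ w := fun h => huL (h ▸ hw)
    obtain ⟨p, hp⟩ := hproj.1 _ (lineThru_mem A huw) M hM
    exact ⟨p, hp.2, hp.1⟩
  classical
  set F : X → X := fun w => if hw : w ∈ L then (hfun w hw).choose else u with hF
  have hFspec : ∀ w (hw : w ∈ L), F w ∈ M ∧ F w ∈ lineThru A u w := by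
    intro w hw
    simp only [hF, dif_pos hw]
    exact (hfun w hw).choose_spec
  have hinj : Set.InjOn F L := by
    intro w₁ hw₁ w₂ hw₂ heq
    have s₁ := hFspec w₁ hw₁
    have s₂ := hFspec w₂ hw₂
    rw [heq] at s₁
    have hu₁ : u ≠ w₁ := fun h => huL (h ▸ hw₁)
    have hu₂ : u ≠ w₂ := fun h => huL (h ▸ hw₂)
    by_cases hll : lineThru A u w₁ = lineThru A u w₂
    · have hNL : lineThru A u w₁ ≠ L := fun h => huL (h ▸ left_mem_lineThru A hu₁)
      exact A.inter_subsingleton _ (lineThru_mem A hu₁) L hL hNL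
        ⟨right_mem_lineThru A hu₁, hw₁⟩ ⟨hll ▸ right_mem_lineThru A hu₂, hw₂⟩
    · exfalso
      have := A.inter_subsingleton _ (lineThru_mem A hu₁) _ (lineThru_mem A hu₂) hll
        ⟨s₁.2, s₂.2⟩ ⟨left_mem_lineThru A hu₁, left_mem_lineThru A hu₂⟩
      rw [this] at s₁
      exact huM s₁.1
  calc L.encard = (F '' L).encard := (hinj.encard_image).symm
    _ ≤ M.encard := Set.encard_mono (by rintro _ ⟨w, hw, rfl⟩; exact (hFspec w hw).1)

theorem encard_le_four (u v w s : X) : ({u, v, w, s} : Set X).encard ≤ 4 := by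
  calc ({u,v,w,s} : Set X).encard ≤ ({v,w,s} : Set X).encard + 1 := Set.encard_insert_le _ _
   _ ≤ (({w,s} : Set X).encard + 1) + 1 := add_le_add_left (Set.encard_insert_le _ _) 1
   _ ≤ ((({s} : Set X).encard + 1) + 1) + 1 :=
      add_le_add_left (add_le_add_left (Set.encard_insert_le _ _) 1) 1
   _ = 4 := by rw [Set.encard_singleton]; norm_num

/-- The key step: in a homogeneous projective plane every line has at most 4 points. -/
theorem line_card_le (hproj : IsProjPlane A) (hhom : Homogeneous A) :
    ∀ L ∈ A.lines, L.encard ≤ (4 : ℕ∞) := by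
  classical
  obtain ⟨a₀, b₀, c₀, d₀, hab₀, hac₀, had₀, hbc₀, hbd₀, hcd₀, H₀⟩ := hproj.2
  have hX2 : ∃ u v : X, u ≠ v := ⟨a₀, b₀, hab₀⟩
  have hmeet := hproj.1
  intro L hL
  by_contra hbig
  have hpickL : ∀ T : Set X, T.encard ≤ 4 → ∃ z ∈ L, z ∉ T := by
    intro T hT
    by_contra h
    push_neg at h
    exact hbig ((Set.encard_mono h).trans hT)
  -- pick a point c on L and a point a off L
  obtain ⟨c, -, -, hcL, -, -, -, -, -⟩ := three_points A hproj hL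
  obtain ⟨a, haL⟩ := exists_off_line A hproj hL
  have hac : a ≠ c := fun h => haL (h ▸ hcL)
  have hN : lineThru A a c ∈ A.lines := lineThru_mem A hac
  set N : Set X := lineThru A a c with hNdef
  have haN : a ∈ N := left_mem_lineThru A hac
  have hcN : c ∈ N := right_mem_lineThru A hac
  have hNL : N ≠ L := fun h => haL (h ▸ haN)
  -- the line N meets L only in c
  have hNLc : ∀ z, z ∈ N → z ∈ L → z = c :=
    fun z h1 h2 => A.inter_subsingleton N hN L hL hNL ⟨h1, h2⟩ ⟨hcN, hcL⟩
  -- b : a third point on N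
  obtain ⟨b, hbN, hba, hbc⟩ := third_point A hproj hN a c
  have hab : a ≠ b := Ne.symm hba
  have hbL : b ∉ L := fun h => hbc (hNLc b hbN h)
  -- N is also a "big" line
  have hNbig : ¬ N.encard ≤ 4 :=
    fun h4 => hbig ((encard_line_le A hproj hL hN hNL.symm).trans h4)
  have hpickN : ∀ T : Set X, T.encard ≤ 4 → ∃ z ∈ N, z ∉ T := by
    intro T hT
    by_contra h
    push_neg at h
    exact hNbig ((Set.encard_mono h).trans hT)
  -- pick c₁ d on L, distinct, both ≠ c
  obtain ⟨c₁, hc₁L, hc₁T⟩ := hpickL {c, c, c, c} (encard_le_four c c c c)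
  have hc₁c : c₁ ≠ c := by simpa using hc₁T
  obtain ⟨d, hdL, hdT⟩ := hpickL {c, c, c, c₁} (encard_le_four c c c c₁)
  have hdc : d ≠ c := by simp only [Set.mem_insert_iff, Set.mem_singleton_iff, not_or] at hdT; exact hdT.1
  have hdc₁ : d ≠ c₁ := by simp only [Set.mem_insert_iff, Set.mem_singleton_iff, not_or] at hdT; exact hdT.2.2.2
  have hc₁d : c₁ ≠ d := Ne.symm hdc₁
  have hc₁N : c₁ ∉ N := fun h => hc₁c (hNLc c₁ h hc₁L)
  have hdN : d ∉ N := fun h => hdc (hNLc d h hdL)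
  -- pick x on N, distinct from a b c
  obtain ⟨x, hxN, hxT⟩ := hpickN {a, b, c, c} (encard_le_four a b c c)
  have hxa : x ≠ a := by simp only [Set.mem_insert_iff, Set.mem_singleton_iff, not_or] at hxT; exact hxT.1
  have hxb : x ≠ b := by simp only [Set.mem_insert_iff, Set.mem_singleton_iff, not_or] at hxT; exact hxT.2.1
  have hxc : x ≠ c := by simp only [Set.mem_insert_iff, Set.mem_singleton_iff, not_or] at hxT; exact hxT.2.2.1
  have hxL : x ∉ L := fun h => hxc (hNLc x hxN h)
  -- the construction of the "definable" point y on L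
  have hxd : x ≠ d := fun h => hxL (h ▸ hdL)
  have hac₁ : a ≠ c₁ := fun h => haL (h ▸ hc₁L)
  have hK₁ : lineThru A x d ∈ A.lines := lineThru_mem A hxd
  set K₁ : Set X := lineThru A x d with hK₁def
  have hK₂ : lineThru A a c₁ ∈ A.lines := lineThru_mem A hac₁
  set K₂ : Set X := lineThru A a c₁ with hK₂def
  have hxK₁ : x ∈ K₁ := left_mem_lineThru A hxd
  have hdK₁ : d ∈ K₁ := right_mem_lineThru A hxd
  have haK₂ : a ∈ K₂ := left_mem_lineThru A hac₁
  have hc₁K₂ : c₁ ∈ K₂ := right_mem_lineThru A hac₁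
  -- N ∩ K₂ ⊆ {a}
  have hNK₂ : N ≠ K₂ := fun h => hc₁N (h ▸ hc₁K₂)
  have hNK₂a : ∀ z, z ∈ N → z ∈ K₂ → z = a :=
    fun z h1 h2 => A.inter_subsingleton N hN K₂ hK₂ hNK₂ ⟨h1, h2⟩ ⟨haN, haK₂⟩
  have hxK₂ : x ∉ K₂ := fun h => hxa (hNK₂a x hxN h)
  have hK₁K₂ : K₁ ≠ K₂ := fun h => hxK₂ (h ▸ hxK₁)
  obtain ⟨p, hpK₁, hpK₂⟩ := hmeet K₁ hK₁ K₂ hK₂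
  -- p ∉ N
  have hpN : p ∉ N := by
    intro hpN
    have hpa : p = a := hNK₂a p hpN hpK₂
    rw [hpa] at hpK₁
    have hK₁N : K₁ = N := line_eq_of_two A hK₁ hN hxa hxK₁ hpK₁ hxN haN
    exact hdN (hK₁N ▸ hdK₁)
  have hpb : p ≠ b := fun h => hpN (h ▸ hbN)
  have hKb : lineThru A p b ∈ A.lines := lineThru_mem A hpb
  set Kb : Set X := lineThru A p b with hKbdef
  have hpKb : p ∈ Kb := left_mem_lineThru A hpb
  have hbKb : b ∈ Kb := right_mem_lineThru A hpb
  have hKbL : Kb ≠ L := fun h => hbL (h ▸ hbKb)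
  obtain ⟨y, hyKb, hyL⟩ := hmeet Kb hKb L hL
  -- y is not on N
  have hKbN : Kb ≠ N := fun h => hpN (h ▸ hpKb)
  have hyN : y ∉ N := by
    intro hyN
    have : y = b := A.inter_subsingleton Kb hKb N hN hKbN ⟨hyKb, hyN⟩ ⟨hbKb, hbN⟩
    exact hbL (this ▸ hyL)
  -- y ≠ c₁
  have hK₁L : K₁ ≠ L := fun h => hxL (h ▸ hxK₁)
  have hpc₁ : p ≠ c₁ := by
    intro h
    rw [h] at hpK₁
    exact hc₁d (A.inter_subsingleton K₁ hK₁ L hL hK₁L ⟨hpK₁, hc₁L⟩ ⟨hdK₁, hdL⟩)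
  have hyc₁ : y ≠ c₁ := by
    intro h
    rw [h] at hyKb
    have hKbK₂ : Kb = K₂ := line_eq_of_two A hKb hK₂ hpc₁ hpKb hyKb hpK₂ hc₁K₂
    exact hab (hNK₂a b hbN (hKbK₂ ▸ hbKb)).symm
  -- y ≠ d
  have hbd : b ≠ d := fun h => hbL (h ▸ hdL)
  have hK₂L : K₂ ≠ L := fun h => haL (h ▸ haK₂)
  have hyd : y ≠ d := by
    intro h
    rw [h] at hyKb
    -- now d ∈ Kb, so Kb is the line through b and d
    have hK₃ : lineThru A b d ∈ A.lines := lineThru_mem A hbd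
    have hKbK₃ : Kb = lineThru A b d :=
      line_eq_of_two A hKb hK₃ hbd hbKb hyKb (left_mem_lineThru A hbd) (right_mem_lineThru A hbd)
    have hpK₃ : p ∈ lineThru A b d := hKbK₃ ▸ hpKb
    have hK₁K₃ : K₁ ≠ lineThru A b d := by
      intro hq
      have hxK₃ : x ∈ lineThru A b d := hq ▸ hxK₁
      have hK₃N : lineThru A b d ≠ N := fun hq2 => hdN (hq2 ▸ right_mem_lineThru A hbd)
      exact hxb (A.inter_subsingleton _ hK₃ N hN hK₃N ⟨hxK₃, hxN⟩
        ⟨left_mem_lineThru A hbd, hbN⟩)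
    have hpd : p = d :=
      A.inter_subsingleton K₁ hK₁ _ hK₃ hK₁K₃ ⟨hpK₁, hpK₃⟩ ⟨hdK₁, right_mem_lineThru A hbd⟩
    rw [hpd] at hpK₂
    exact hdc₁ (A.inter_subsingleton K₂ hK₂ L hL hK₂L ⟨hpK₂, hdL⟩ ⟨hc₁K₂, hc₁L⟩)
  -- pick the second target point y'
  obtain ⟨y', hy'L, hy'T⟩ := hpickL {c₁, d, y, c} (encard_le_four c₁ d y c)
  have hy'c₁ : y' ≠ c₁ := by simp only [Set.mem_insert_iff, Set.mem_singleton_iff, not_or] at hy'T; exact hy'T.1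
  have hy'd : y' ≠ d := by simp only [Set.mem_insert_iff, Set.mem_singleton_iff, not_or] at hy'T; exact hy'T.2.1
  have hy'y : y' ≠ y := by simp only [Set.mem_insert_iff, Set.mem_singleton_iff, not_or] at hy'T; exact hy'T.2.2.1
  have hy'c : y' ≠ c := by simp only [Set.mem_insert_iff, Set.mem_singleton_iff, not_or] at hy'T; exact hy'T.2.2.2
  have hy'N : y' ∉ N := fun h => hy'c (hNLc y' h hy'L)
  -- the finite configuration S and the isomorphism f
  set S : Set X := {a, b, c₁, d, x, y} with hSdef
  have hSfin : S.Finite :=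
    Set.Finite.insert a (Set.Finite.insert b (Set.Finite.insert c₁
      (Set.Finite.insert d (Set.Finite.insert x (Set.finite_singleton y)))))
  have hmemS : ∀ z, z ∈ S ↔ (z = a ∨ z = b ∨ z = c₁ ∨ z = d ∨ z = x ∨ z = y) := by
    intro z
    simp [hSdef]
  have haS : a ∈ S := (hmemS a).mpr (Or.inl rfl)
  have hbS : b ∈ S := (hmemS b).mpr (Or.inr (Or.inl rfl))
  have hc₁S : c₁ ∈ S := (hmemS c₁).mpr (Or.inr (Or.inr (Or.inl rfl)))
  have hdS : d ∈ S := (hmemS d).mpr (Or.inr (Or.inr (Or.inr (Or.inl rfl))))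
  have hxS : x ∈ S := (hmemS x).mpr (Or.inr (Or.inr (Or.inr (Or.inr (Or.inl rfl)))))
  have hyS : y ∈ S := (hmemS y).mpr (Or.inr (Or.inr (Or.inr (Or.inr (Or.inr rfl)))))
  have hay : a ≠ y := fun h => haL (h ▸ hyL)
  have hby : b ≠ y := fun h => hbL (h ▸ hyL)
  have hxy : x ≠ y := fun h => hxL (h ▸ hyL)
  have hy'a : y' ≠ a := fun h => haL (h ▸ hy'L)
  have hy'b : y' ≠ b := fun h => hbL (h ▸ hy'L)
  have hy'x : y' ≠ x := fun h => hxL (h ▸ hy'L)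
  set f : X → X := fun z => if z = y then y' else z with hfdef
  have hfy : f y = y' := by simp [hfdef]
  have hfne : ∀ z, z ≠ y → f z = z := by
    intro z hz
    simp [hfdef, hz]
  have hy'ne : ∀ z ∈ S, z ≠ y → y' ≠ z := by
    intro z hz hzy
    rcases (hmemS z).mp hz with rfl | rfl | rfl | rfl | rfl | rfl
    · exact hy'a
    · exact hy'b
    · exact hy'c₁
    · exact hy'd
    · exact hy'x
    · exact absurd rfl hzy
  have hinj : Set.InjOn f S := by
    intro z1 h1 z2 h2 heq
    by_cases e1 : z1 = y <;> by_cases e2 : z2 = y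
    · rw [e1, e2]
    · exfalso
      rw [e1, hfy, hfne z2 e2] at heq
      exact hy'ne z2 h2 e2 heq
    · exfalso
      rw [e2, hfy, hfne z1 e1] at heq
      exact hy'ne z1 h1 e1 heq.symm
    · rw [hfne z1 e1, hfne z2 e2] at heq
      exact heq
  have hside : ∀ z ∈ S, z ∈ N ∨ z ∈ L := by
    intro z hz
    rcases (hmemS z).mp hz with rfl | rfl | rfl | rfl | rfl | rfl
    exacts [Or.inl haN, Or.inl hbN, Or.inr hc₁L, Or.inr hdL, Or.inl hxN, Or.inr hyL]
  have hsideF : ∀ z ∈ S, f z ∈ N ∨ f z ∈ L := by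
    intro z hz
    by_cases e : z = y
    · rw [e, hfy]; exact Or.inr hy'L
    · rw [hfne z e]; exact hside z hz
  have hfN : ∀ z ∈ S, (f z ∈ N ↔ z ∈ N) := by
    intro z hz
    by_cases e : z = y
    · rw [e, hfy]
      exact iff_of_false hy'N hyN
    · rw [hfne z e]
  have hfL : ∀ z ∈ S, (f z ∈ L ↔ z ∈ L) := by
    intro z hz
    by_cases e : z = y
    · rw [e, hfy]
      exact iff_of_true hy'L hyL
    · rw [hfne z e]
  have hfeq : ∀ z1 ∈ S, ∀ z2 ∈ S, ((f z1 = f z2) ↔ (z1 = z2)) :=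
    fun z1 h1 z2 h2 => ⟨fun h => hinj h1 h2 h, fun h => by rw [h]⟩
  have hiso : ∀ z1 ∈ S, ∀ z2 ∈ S, ∀ z3 ∈ S,
      (Collin A z1 z2 z3 ↔ Collin A (f z1) (f z2) (f z3)) := by
    intro z1 h1 z2 h2 z3 h3
    rw [collin_char A hX2 hN hL (hside z1 h1) (hside z2 h2) (hside z3 h3),
        collin_char A hX2 hN hL (hsideF z1 h1) (hsideF z2 h2) (hsideF z3 h3),
        hfN z1 h1, hfN z2 h2, hfN z3 h3, hfL z1 h1, hfL z2 h2, hfL z3 h3,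
        hfeq z1 h1 z2 h2, hfeq z1 h1 z3 h3, hfeq z2 h2 z3 h3]
  obtain ⟨g, hgauto, hgS⟩ := hhom S hSfin f hinj hiso
  have hga : g a = a := (hgS a haS).trans (hfne a hay)
  have hgb : g b = b := (hgS b hbS).trans (hfne b hby)
  have hgc₁ : g c₁ = c₁ := (hgS c₁ hc₁S).trans (hfne c₁ (fun h => hyc₁ h.symm))
  have hgd : g d = d := (hgS d hdS).trans (hfne d (fun h => hyd h.symm))
  have hgx : g x = x := (hgS x hxS).trans (hfne x hxy)
  have hgy : g y = y' := (hgS y hyS).trans hfy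
  -- but g must fix y, since y is constructed from a,b,c₁,d,x by lines and intersections
  have hgp : g p = p := by
    have h1 : g p ∈ K₁ := auto_mem_lineThru A hgauto hxd hgx hgd hpK₁
    have h2 : g p ∈ K₂ := auto_mem_lineThru A hgauto hac₁ hga hgc₁ hpK₂
    exact A.inter_subsingleton K₁ hK₁ K₂ hK₂ hK₁K₂ ⟨h1, h2⟩ ⟨hpK₁, hpK₂⟩
  have hgyfix : g y = y := by
    have h1 : g y ∈ Kb := auto_mem_lineThru A hgauto hpb hgp hgb hyKb
    have hLeq : L = lineThru A c₁ d := eq_lineThru A hL hc₁d hc₁L hdL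
    have h2 : g y ∈ L := by
      rw [hLeq]
      exact auto_mem_lineThru A hgauto hc₁d hgc₁ hgd (hLeq ▸ hyL)
    exact A.inter_subsingleton Kb hKb L hL hKbL ⟨h1, h2⟩ ⟨hyKb, hyL⟩
  exact hy'y (hgy.symm.trans hgyfix)

end Stmt4Aux


/-- A homogeneous projective plane has degree at most 4; in particular it is finite. -/
theorem stmt4 {X : Type u} (A : LinSpace X) (hproj : IsProjPlane A)
    (hhom : Homogeneous A) :
    DegLE A 4 ∧ Finite X := by
  classical
  open Stmt4Aux in
  have hline4 := Stmt4Aux.line_card_le A hproj hhom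
  obtain ⟨a₀, b₀, c₀, d₀, hab₀, hac₀, had₀, hbc₀, hbd₀, hcd₀, H₀⟩ := hproj.2
  -- for every point there is a line avoiding it
  have hoff : ∀ q : X, ∃ M ∈ A.lines, q ∉ M := by
    intro q
    by_cases h1 : q ∈ Stmt4Aux.lineThru A a₀ b₀
    · by_cases h2 : q ∈ Stmt4Aux.lineThru A c₀ d₀
      · refine ⟨Stmt4Aux.lineThru A a₀ c₀, Stmt4Aux.lineThru_mem A hac₀, fun h3 => ?_⟩
        have habac : Stmt4Aux.lineThru A a₀ b₀ ≠ Stmt4Aux.lineThru A a₀ c₀ := by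
          intro hq
          exact H₀ a₀ b₀ c₀ (by simp) (by simp) (by simp) hab₀ hac₀ hbc₀
            ((Stmt4Aux.collin_iff_mem A hab₀).mpr (hq ▸ Stmt4Aux.right_mem_lineThru A hac₀))
        have hqa : q = a₀ :=
          A.inter_subsingleton _ (Stmt4Aux.lineThru_mem A hab₀) _ (Stmt4Aux.lineThru_mem A hac₀)
            habac ⟨h1, h3⟩
            ⟨Stmt4Aux.left_mem_lineThru A hab₀, Stmt4Aux.left_mem_lineThru A hac₀⟩
        exact H₀ c₀ d₀ a₀ (by simp) (by simp) (by simp) hcd₀ (Ne.symm hac₀) (Ne.symm had₀)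
          ((Stmt4Aux.collin_iff_mem A hcd₀).mpr (hqa ▸ h2))
      · exact ⟨_, Stmt4Aux.lineThru_mem A hcd₀, h2⟩
    · exact ⟨_, Stmt4Aux.lineThru_mem A hab₀, h1⟩
  -- every point lies on at most 4 lines
  have hpoint : ∀ q : X, {K | K ∈ A.lines ∧ q ∈ K}.encard ≤ (4 : ℕ∞) := by
    intro q
    obtain ⟨M, hM, hqM⟩ := hoff q
    have hKex : ∀ K ∈ {K | K ∈ A.lines ∧ q ∈ K}, ∃ v, v ∈ K ∩ M :=
      fun K hK => hproj.1 K hK.1 M hM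
    set F : Set X → X := fun K =>
      if h : K ∈ {K | K ∈ A.lines ∧ q ∈ K} then (hKex K h).choose else q with hF
    have hFspec : ∀ K (h : K ∈ {K | K ∈ A.lines ∧ q ∈ K}), F K ∈ K ∩ M := by
      intro K h
      simp only [hF, dif_pos h]
      exact (hKex K h).choose_spec
    have hinj : Set.InjOn F {K | K ∈ A.lines ∧ q ∈ K} := by
      intro K1 h1 K2 h2 heq
      by_contra hne
      have s1 := hFspec K1 h1
      have s2 := hFspec K2 h2
      rw [heq] at s1
      exact hqM ((A.inter_subsingleton K1 h1.1 K2 h2.1 hne ⟨s1.1, s2.1⟩ ⟨h1.2, h2.2⟩) ▸ s2.2)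
    calc {K | K ∈ A.lines ∧ q ∈ K}.encard
        = (F '' {K | K ∈ A.lines ∧ q ∈ K}).encard := hinj.encard_image.symm
      _ ≤ M.encard := Set.encard_mono (by rintro _ ⟨K, hK, rfl⟩; exact (hFspec K hK).2)
      _ ≤ 4 := hline4 M hM
  refine ⟨⟨fun L hL => by simpa using hline4 L hL, fun q => by simpa using hpoint q⟩, ?_⟩
  -- finiteness
  have h4top : (4 : ℕ∞) < ⊤ := by exact_mod_cast ENat.coe_lt_top 4
  have hPfin : {K | K ∈ A.lines ∧ a₀ ∈ K}.Finite :=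
    Set.encard_lt_top_iff.mp (lt_of_le_of_lt (hpoint a₀) h4top)
  have hLfin : ∀ K ∈ A.lines, K.Finite :=
    fun K hK => Set.encard_lt_top_iff.mp (lt_of_le_of_lt (hline4 K hK) h4top)
  have huniv : (Set.univ : Set X) ⊆ insert a₀ (⋃ K ∈ {K | K ∈ A.lines ∧ a₀ ∈ K}, K) := by
    intro z _
    rcases eq_or_ne z a₀ with rfl | hz
    · exact Set.mem_insert _ _
    · refine Set.mem_insert_of_mem _ ?_
      exact Set.mem_biUnion
        (⟨Stmt4Aux.lineThru_mem A (Ne.symm hz), Stmt4Aux.left_mem_lineThru A (Ne.symm hz)⟩ :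
          Stmt4Aux.lineThru A a₀ z ∈ {K | K ∈ A.lines ∧ a₀ ∈ K})
        (Stmt4Aux.right_mem_lineThru A (Ne.symm hz))
  have hfin : (Set.univ : Set X).Finite :=
    Set.Finite.subset (Set.Finite.insert a₀ (hPfin.biUnion fun K hK => hLfin K hK.1)) huniv
  exact Set.finite_univ_iff.mp hfin
end

section
/- The Fano plane (the unique projective plane of order 2, with 7 points and 7 lines of 3 points each) is homogeneous: every isomorphism between subspaces extends to an automorphism. -/
open Set Function

universe u v w

namespace Fano

variable {X : Type u} {A : LinSpace X}

lemma col_of_line {L : Set X} {x y z : X} (hL : L ∈ A.lines) (hx : x ∈ L) (hy : y ∈ L)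
    (hz : z ∈ L) : Collin A x y z := ⟨L, hL, hx, hy, hz⟩

lemma col_swap12 {x y z : X} (h : Collin A x y z) : Collin A y x z := by
  obtain ⟨L, h1, h2, h3, h4⟩ := h; exact ⟨L, h1, h3, h2, h4⟩

lemma col_swap23 {x y z : X} (h : Collin A x y z) : Collin A x z y := by
  obtain ⟨L, h1, h2, h3, h4⟩ := h; exact ⟨L, h1, h2, h4, h3⟩

lemma col_rot {x y z : X} (h : Collin A x y z) : Collin A y z x := col_swap23 (col_swap12 h)

lemma line_unique {L M : Set X} {x y : X} (hL : L ∈ A.lines) (hM : M ∈ A.lines)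
    (hxy : x ≠ y) (hxL : x ∈ L) (hyL : y ∈ L) (hxM : x ∈ M) (hyM : y ∈ M) : L = M := by
  by_contra h
  exact hxy (A.inter_subsingleton L hL M hM h ⟨hxL, hxM⟩ ⟨hyL, hyM⟩)

lemma inter_unique {L M : Set X} {u x : X} (hL : L ∈ A.lines) (hM : M ∈ A.lines) (hne : L ≠ M)
    (huL : u ∈ L) (huM : u ∈ M) (hxL : x ∈ L) (hxM : x ∈ M) : x = u :=
  A.inter_subsingleton L hL M hM hne ⟨hxL, hxM⟩ ⟨huL, huM⟩

lemma not_col_off {L : Set X} {s t x : X} (hL : L ∈ A.lines) (hs : s ∈ L) (ht : t ∈ L)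
    (hst : s ≠ t) (hx : x ∉ L) : ¬ Collin A x s t := by
  rintro ⟨M, hM, hxM, hsM, htM⟩
  exact hx ((line_unique hM hL hst hsM htM hs ht) ▸ hxM)

lemma third_point (hA : IsFano A) {L : Set X} {x y : X} (hL : L ∈ A.lines) (hx : x ∈ L)
    (hy : y ∈ L) (hxy : x ≠ y) : ∃ z, L = {x, y, z} ∧ z ≠ x ∧ z ≠ y := by
  have h3 := hA.2.1 _ hL
  have hns : ¬ L ⊆ ({x, y} : Set X) := by
    intro hsub
    have := Set.encard_mono hsub
    rw [h3, Set.encard_pair hxy] at this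
    norm_num at this
  obtain ⟨z, hzL, hz⟩ := Set.not_subset.mp hns
  simp only [Set.mem_insert_iff, Set.mem_singleton_iff, not_or] at hz
  refine ⟨z, ?_, fun h => hz.1 h, fun h => hz.2 h⟩
  have hsub : ({x, y, z} : Set X) ⊆ L := by
    intro t ht
    rcases ht with rfl|rfl|rfl <;> assumption
  have hcard : ({x, y, z} : Set X).encard = 3 := by
    rw [Set.encard_insert_of_notMem (by simp [hxy, Ne.symm hz.1]),
      Set.encard_insert_of_notMem (by simp [Ne.symm hz.2]), Set.encard_singleton]
    rfl
  exact ((Set.finite_of_encard_eq_coe h3).eq_of_subset_of_encard_le' hsub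
    (by rw [h3, hcard])).symm

lemma exists_not_mem_line (hA : IsFano A) {L : Set X} (hL : L ∈ A.lines) : ∃ x, x ∉ L := by
  have h3 := hA.2.1 L hL
  have hne : L ≠ univ := by
    intro h; rw [h, hA.2.2] at h3; norm_num at h3
  exact (Set.ne_univ_iff_exists_notMem L).mp hne

lemma exists_ne' (hA : IsFano A) (u : X) : ∃ v, v ≠ u := by
  have h : 1 < (univ : Set X).encard := by rw [hA.2.2]; norm_num
  obtain ⟨b, -, hb⟩ := Set.exists_ne_of_one_lt_encard h u
  exact ⟨b, hb⟩

lemma exists_line' (hA : IsFano A) (u v : X) : ∃ L ∈ A.lines, u ∈ L ∧ v ∈ L := by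
  rcases eq_or_ne u v with rfl|h
  · obtain ⟨w, hw⟩ := exists_ne' hA u
    obtain ⟨L, hL, _, h2⟩ := A.exists_line w u hw
    exact ⟨L, hL, h2, h2⟩
  · exact A.exists_line u v h

lemma col_degen (hA : IsFano A) {x y z : X} (h : x = y ∨ x = z ∨ y = z) : Collin A x y z := by
  rcases h with rfl|rfl|rfl
  · obtain ⟨L, hL, h1, h2⟩ := exists_line' hA x z; exact ⟨L, hL, h1, h1, h2⟩
  · obtain ⟨L, hL, h1, h2⟩ := exists_line' hA x y; exact ⟨L, hL, h1, h2, h1⟩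
  · obtain ⟨L, hL, h1, h2⟩ := exists_line' hA x y; exact ⟨L, hL, h1, h2, h2⟩

lemma lines_meet (hA : IsFano A) {L M : Set X} (hL : L ∈ A.lines) (hM : M ∈ A.lines) :
    ∃ x, x ∈ L ∧ x ∈ M := hA.1.1 L hL M hM

/-- partial isomorphism on `S` -/
def PIso (A : LinSpace X) (S : Set X) (f : X → X) : Prop :=
  Set.InjOn f S ∧ ∀ x ∈ S, ∀ y ∈ S, ∀ z ∈ S, (Collin A x y z ↔ Collin A (f x) (f y) (f z))

/-- four points in general position -/
def Fr (A : LinSpace X) (a b c d : X) : Prop :=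
  a ≠ b ∧ a ≠ c ∧ a ≠ d ∧ b ≠ c ∧ b ≠ d ∧ c ≠ d ∧
    ∀ p q r : X, p ∈ ({a, b, c, d} : Set X) → q ∈ ({a, b, c, d} : Set X) →
      r ∈ ({a, b, c, d} : Set X) → p ≠ q → p ≠ r → q ≠ r → ¬ Collin A p q r

lemma frame_of {a b c d : X} (hab : a ≠ b) (hac : a ≠ c) (had : a ≠ d) (hbc : b ≠ c)
    (hbd : b ≠ d) (hcd : c ≠ d)
    (h1 : ¬ Collin A a b c) (h2 : ¬ Collin A a b d) (h3 : ¬ Collin A a c d)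
    (h4 : ¬ Collin A b c d) : Fr A a b c d := by
  refine ⟨hab, hac, had, hbc, hbd, hcd, ?_⟩
  intro p q r hp hq hr hpq hpr hqr hcol
  simp only [Set.mem_insert_iff, Set.mem_singleton_iff] at hp hq hr
  rcases hp with rfl|rfl|rfl|rfl <;> rcases hq with rfl|rfl|rfl|rfl <;>
      rcases hr with rfl|rfl|rfl|rfl <;>
    first
    | exact hpq rfl
    | exact hpr rfl
    | exact hqr rfl
    | exact h1 hcol
    | exact h1 (col_swap12 hcol)
    | exact h1 (col_swap23 hcol)
    | exact h1 (col_rot hcol)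
    | exact h1 (col_rot (col_rot hcol))
    | exact h1 (col_swap12 (col_rot hcol))
    | exact h2 hcol
    | exact h2 (col_swap12 hcol)
    | exact h2 (col_swap23 hcol)
    | exact h2 (col_rot hcol)
    | exact h2 (col_rot (col_rot hcol))
    | exact h2 (col_swap12 (col_rot hcol))
    | exact h3 hcol
    | exact h3 (col_swap12 hcol)
    | exact h3 (col_swap23 hcol)
    | exact h3 (col_rot hcol)
    | exact h3 (col_rot (col_rot hcol))
    | exact h3 (col_swap12 (col_rot hcol))
    | exact h4 hcol
    | exact h4 (col_swap12 hcol)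
    | exact h4 (col_swap23 hcol)
    | exact h4 (col_rot hcol)
    | exact h4 (col_rot (col_rot hcol))
    | exact h4 (col_swap12 (col_rot hcol))

end Fano
namespace Fano
variable {X : Type u} {A : LinSpace X}

lemma ext_piso (hA : IsFano A) {S : Set X} {f : X → X} {x y : X}
    (hP : PIso A S f) (hx : x ∉ S) (hy : y ∉ f '' S)
    (h : ∀ s ∈ S, ∀ t ∈ S, s ≠ t → (Collin A x s t ↔ Collin A y (f s) (f t))) :
    ∃ f', PIso A (insert x S) f' ∧ (∀ s ∈ S, f' s = f s) ∧ f' x = y := by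
  classical
  set g := Function.update f x y with hg
  have gx : g x = y := Function.update_self x y f
  have feq : ∀ s ∈ S, g s = f s := fun s hs =>
    Function.update_of_ne (by rintro rfl; exact hx hs) y f
  have key : ∀ s ∈ S, ∀ t ∈ S, (Collin A x s t ↔ Collin A y (f s) (f t)) := by
    intro s hs t ht
    rcases eq_or_ne s t with rfl|hst
    · exact iff_of_true (col_degen hA (Or.inr (Or.inr rfl)))
        (col_degen hA (Or.inr (Or.inr rfl)))
    · exact h s hs t ht hst
  refine ⟨g, ⟨?_, ?_⟩, feq, gx⟩
  · intro u hu v hv huv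
    rcases Set.mem_insert_iff.mp hu with rfl|hu' <;>
      rcases Set.mem_insert_iff.mp hv with rfl|hv'
    · rfl
    · exfalso; rw [gx, feq v hv'] at huv; exact hy ⟨v, hv', huv.symm⟩
    · exfalso; rw [gx, feq u hu'] at huv; exact hy ⟨u, hu', huv⟩
    · exact hP.1 hu' hv' (by rwa [feq u hu', feq v hv'] at huv)
  · intro u hu v hv w hw
    rcases Set.mem_insert_iff.mp hu with rfl|hu' <;>
      rcases Set.mem_insert_iff.mp hv with rfl|hv' <;>
      rcases Set.mem_insert_iff.mp hw with rfl|hw'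
    · exact iff_of_true (col_degen hA (Or.inl rfl)) (col_degen hA (Or.inl rfl))
    · exact iff_of_true (col_degen hA (Or.inl rfl)) (col_degen hA (Or.inl rfl))
    · exact iff_of_true (col_degen hA (Or.inr (Or.inl rfl)))
        (col_degen hA (Or.inr (Or.inl rfl)))
    · rw [gx, feq v hv', feq w hw']; exact key v hv' w hw'
    · exact iff_of_true (col_degen hA (Or.inr (Or.inr rfl)))
        (col_degen hA (Or.inr (Or.inr rfl)))
    · rw [gx, feq u hu', feq w hw']
      exact ⟨fun hc => col_swap12 ((key u hu' w hw').mp (col_swap12 hc)),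
        fun hc => col_swap12 ((key u hu' w hw').mpr (col_swap12 hc))⟩
    · rw [gx, feq u hu', feq v hv']
      exact ⟨fun hc => col_rot ((key u hu' v hv').mp (col_rot (col_rot hc))),
        fun hc => col_rot ((key u hu' v hv').mpr (col_rot (col_rot hc)))⟩
    · rw [feq u hu', feq v hv', feq w hw']; exact hP.2 u hu' v hv' w hw'

end Fano
namespace Fano
variable {X : Type u} {A : LinSpace X}

structure Coord (A : LinSpace X) (a b c d : X) where
  p : X
  q : X
  r : X
  Lab : Set X
  Lcd : Set X
  Lac : Set X
  Lbd : Set X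
  Lad : Set X
  Lbc : Set X
  Lpqr : Set X
  hLab : Lab ∈ A.lines
  eLab : Lab = {a, b, p}
  hLcd : Lcd ∈ A.lines
  eLcd : Lcd = {c, d, p}
  hLac : Lac ∈ A.lines
  eLac : Lac = {a, c, q}
  hLbd : Lbd ∈ A.lines
  eLbd : Lbd = {b, d, q}
  hLad : Lad ∈ A.lines
  eLad : Lad = {a, d, r}
  hLbc : Lbc ∈ A.lines
  eLbc : Lbc = {b, c, r}
  hLpqr : Lpqr ∈ A.lines
  eLpqr : Lpqr = {p, q, r}
  pa : p ≠ a
  pb : p ≠ b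
  pc : p ≠ c
  pd : p ≠ d
  qa : q ≠ a
  qb : q ≠ b
  qc : q ≠ c
  qd : q ≠ d
  ra : r ≠ a
  rb : r ≠ b
  rc : r ≠ c
  rd : r ≠ d
  pq : p ≠ q
  pr : p ≠ r
  qr : q ≠ r
  cover : ∀ x : X, x = a ∨ x = b ∨ x = c ∨ x = d ∨ x = p ∨ x = q ∨ x = r
  classify : ∀ M ∈ A.lines,
    M = Lab ∨ M = Lcd ∨ M = Lac ∨ M = Lbd ∨ M = Lad ∨ M = Lbc ∨ M = Lpqr

set_option maxHeartbeats 1000000 in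
lemma exists_coord (hA : IsFano A) {a b c d : X} (h : Fr A a b c d) :
    Nonempty (Coord A a b c d) := by
  obtain ⟨hab, hac, had, hbc, hbd, hcd, nc⟩ := h
  -- basic non-collinearity facts
  have ncabc : ¬ Collin A a b c := nc a b c (by simp) (by simp) (by simp) hab hac hbc
  have ncabd : ¬ Collin A a b d := nc a b d (by simp) (by simp) (by simp) hab had hbd
  have ncacd : ¬ Collin A a c d := nc a c d (by simp) (by simp) (by simp) hac had hcd
  have ncbcd : ¬ Collin A b c d := nc b c d (by simp) (by simp) (by simp) hbc hbd hcd
  -- the line ab and its third point p, which also lies on cd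
  obtain ⟨Lab, hLab, haLab, hbLab⟩ := A.exists_line a b hab
  obtain ⟨p, eLab, hpa, hpb⟩ := third_point hA hLab haLab hbLab hab
  have hpLab : p ∈ Lab := by rw [eLab]; simp
  obtain ⟨Lcd, hLcd, hcLcd, hdLcd⟩ := A.exists_line c d hcd
  have hcLab : c ∉ Lab := fun h' => ncabc (col_of_line hLab haLab hbLab h')
  have hdLab : d ∉ Lab := fun h' => ncabd (col_of_line hLab haLab hbLab h')
  have haLcd : a ∉ Lcd := fun h' => ncacd (col_of_line hLcd h' hcLcd hdLcd)
  have hbLcd : b ∉ Lcd := fun h' => ncbcd (col_of_line hLcd h' hcLcd hdLcd)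
  have hpc : p ≠ c := fun h' => hcLab (h' ▸ hpLab)
  have hpd : p ≠ d := fun h' => hdLab (h' ▸ hpLab)
  have hpLcd : p ∈ Lcd := by
    obtain ⟨m, hm1, hm2⟩ := lines_meet hA hLab hLcd
    rw [eLab] at hm1
    rcases hm1 with rfl|rfl|rfl
    · exact absurd hm2 haLcd
    · exact absurd hm2 hbLcd
    · exact hm2
  have eLcd : Lcd = {c, d, p} := by
    obtain ⟨p₂, e2, h2c, h2d⟩ := third_point hA hLcd hcLcd hdLcd hcd
    rw [e2] at hpLcd
    rcases hpLcd with rfl|rfl|rfl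
    · exact absurd rfl hpc
    · exact absurd rfl hpd
    · exact e2
  have hpLcd : p ∈ Lcd := by rw [eLcd]; simp
  -- the line ac and its third point q, also on bd
  obtain ⟨Lac, hLac, haLac, hcLac⟩ := A.exists_line a c hac
  obtain ⟨q, eLac, hqa, hqc⟩ := third_point hA hLac haLac hcLac hac
  have hqLac : q ∈ Lac := by rw [eLac]; simp
  obtain ⟨Lbd, hLbd, hbLbd, hdLbd⟩ := A.exists_line b d hbd
  have hbLac : b ∉ Lac := fun h' => ncabc (col_swap23 (col_of_line hLac haLac hcLac h'))
  have hdLac : d ∉ Lac := fun h' => ncacd (col_of_line hLac haLac hcLac h')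
  have haLbd : a ∉ Lbd := fun h' => ncabd (col_rot (col_rot (col_of_line hLbd hbLbd hdLbd h')))
  have hcLbd : c ∉ Lbd := fun h' => ncbcd (col_swap23 (col_of_line hLbd hbLbd hdLbd h'))
  have hqb : q ≠ b := fun h' => hbLac (h' ▸ hqLac)
  have hqd : q ≠ d := fun h' => hdLac (h' ▸ hqLac)
  have hqLbd : q ∈ Lbd := by
    obtain ⟨m, hm1, hm2⟩ := lines_meet hA hLac hLbd
    rw [eLac] at hm1
    rcases hm1 with rfl|rfl|rfl
    · exact absurd hm2 haLbd
    · exact absurd hm2 hcLbd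
    · exact hm2
  have eLbd : Lbd = {b, d, q} := by
    obtain ⟨q₂, e2, h2b, h2d⟩ := third_point hA hLbd hbLbd hdLbd hbd
    rw [e2] at hqLbd
    rcases hqLbd with rfl|rfl|rfl
    · exact absurd rfl hqb
    · exact absurd rfl hqd
    · exact e2
  have hqLbd : q ∈ Lbd := by rw [eLbd]; simp
  -- the line ad and its third point r, also on bc
  obtain ⟨Lad, hLad, haLad, hdLad⟩ := A.exists_line a d had
  obtain ⟨r, eLad, hra, hrd⟩ := third_point hA hLad haLad hdLad had
  have hrLad : r ∈ Lad := by rw [eLad]; simp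
  obtain ⟨Lbc, hLbc, hbLbc, hcLbc⟩ := A.exists_line b c hbc
  have hbLad : b ∉ Lad := fun h' => ncabd (col_swap23 (col_of_line hLad haLad hdLad h'))
  have hcLad : c ∉ Lad := fun h' => ncacd (col_swap23 (col_of_line hLad haLad hdLad h'))
  have haLbc : a ∉ Lbc := fun h' => ncabc (col_rot (col_rot (col_of_line hLbc hbLbc hcLbc h')))
  have hdLbc : d ∉ Lbc := fun h' => ncbcd (col_of_line hLbc hbLbc hcLbc h')
  have hrb : r ≠ b := fun h' => hbLad (h' ▸ hrLad)
  have hrc : r ≠ c := fun h' => hcLad (h' ▸ hrLad)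
  have hrLbc : r ∈ Lbc := by
    obtain ⟨m, hm1, hm2⟩ := lines_meet hA hLad hLbc
    rw [eLad] at hm1
    rcases hm1 with rfl|rfl|rfl
    · exact absurd hm2 haLbc
    · exact absurd hm2 hdLbc
    · exact hm2
  have eLbc : Lbc = {b, c, r} := by
    obtain ⟨r₂, e2, h2b, h2c⟩ := third_point hA hLbc hbLbc hcLbc hbc
    rw [e2] at hrLbc
    rcases hrLbc with rfl|rfl|rfl
    · exact absurd rfl hrb
    · exact absurd rfl hrc
    · exact e2
  have hrLbc : r ∈ Lbc := by rw [eLbc]; simp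
  -- distinctness of p q r
  have hLabac : Lab ≠ Lac := fun h' => hcLab (h' ▸ hcLac)
  have hLabad : Lab ≠ Lad := fun h' => hdLab (h' ▸ hdLad)
  have hLacad : Lac ≠ Lad := fun h' => hdLac (h' ▸ hdLad)
  have haLab2 : a ∈ Lab := haLab
  have hpq : p ≠ q := by
    intro h'
    have : q ∈ Lab := h' ▸ hpLab
    have := inter_unique hLab hLac hLabac haLab haLac this hqLac
    exact hqa this
  have hpr : p ≠ r := by
    intro h'
    have : r ∈ Lab := h' ▸ hpLab
    have := inter_unique hLab hLad hLabad haLab haLad this hrLad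
    exact hra this
  have hqr : q ≠ r := by
    intro h'
    have : r ∈ Lac := h' ▸ hqLac
    have := inter_unique hLac hLad hLacad haLac haLad this hrLad
    exact hra this
  -- cover
  have cover : ∀ x : X, x = a ∨ x = b ∨ x = c ∨ x = d ∨ x = p ∨ x = q ∨ x = r := by
    intro x
    by_cases hxa : x = a
    · exact Or.inl hxa
    obtain ⟨M, hM, hxM, haM⟩ := A.exists_line x a hxa
    obtain ⟨m, hmM, hmLcd⟩ := lines_meet hA hM hLcd
    have hma : m ≠ a := fun h' => haLcd (h' ▸ hmLcd)
    rw [eLcd] at hmLcd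
    rcases hmLcd with rfl|rfl|rfl
    · have : M = Lac := line_unique hM hLac hac haM hmM haLac hcLac
      · rw [this, eLac] at hxM
        rcases hxM with rfl|rfl|rfl
        · exact Or.inl rfl
        · exact Or.inr (Or.inr (Or.inl rfl))
        · exact Or.inr (Or.inr (Or.inr (Or.inr (Or.inr (Or.inl rfl)))))
    · have : M = Lad := line_unique hM hLad had haM hmM haLad hdLad
      · rw [this, eLad] at hxM
        rcases hxM with rfl|rfl|rfl
        · exact Or.inl rfl
        · exact Or.inr (Or.inr (Or.inr (Or.inl rfl)))
        · exact Or.inr (Or.inr (Or.inr (Or.inr (Or.inr (Or.inr rfl)))))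
    · have : M = Lab := line_unique hM hLab (Ne.symm hpa) haM hmM haLab hpLab
      · rw [this, eLab] at hxM
        rcases hxM with rfl|rfl|rfl
        · exact Or.inl rfl
        · exact Or.inr (Or.inl rfl)
        · exact Or.inr (Or.inr (Or.inr (Or.inr (Or.inl rfl))))
  -- the line pqr
  obtain ⟨Lpq, hLpq, hpLpq, hqLpq⟩ := A.exists_line p q hpq
  obtain ⟨t, eLpq, hta, htb⟩ := third_point hA hLpq hpLpq hqLpq hpq
  have htLpq : t ∈ Lpq := by rw [eLpq]; simp
  have eLpqr : Lpq = {p, q, r} := by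
    have htr : t = r := by
      rcases cover t with rfl|rfl|rfl|rfl|rfl|rfl|rfl
      · -- t = a : then Lpq = Lab, so q ∈ Lab, contradiction
        exfalso
        have : Lpq = Lab := line_unique hLpq hLab hpa hpLpq htLpq hpLab haLab
        have hq : q ∈ Lab := this ▸ hqLpq
        exact hqa (inter_unique hLab hLac hLabac haLab haLac hq hqLac)
      · exfalso
        have : Lpq = Lab := line_unique hLpq hLab hpb hpLpq htLpq hpLab hbLab
        have hq : q ∈ Lab := this ▸ hqLpq
        exact hqa (inter_unique hLab hLac hLabac haLab haLac hq hqLac)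
      · exfalso
        have : Lpq = Lac := line_unique hLpq hLac hqc hqLpq htLpq hqLac hcLac
        have hp : p ∈ Lac := this ▸ hpLpq
        exact hpa (inter_unique hLab hLac hLabac haLab haLac hpLab hp)
      · exfalso
        have : Lpq = Lbd := line_unique hLpq hLbd hqd hqLpq htLpq hqLbd hdLbd
        have hp : p ∈ Lbd := this ▸ hpLpq
        have hLabbd : Lab ≠ Lbd := fun h' => hdLab (h' ▸ hdLbd)
        exact hpb (inter_unique hLab hLbd hLabbd hbLab hbLbd hpLab hp)
      · exact absurd rfl hta
      · exact absurd rfl htb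
      · rfl
    rw [htr] at eLpq
    exact eLpq
  have hrLpq : r ∈ Lpq := by rw [eLpqr]; simp
  -- remaining distinctness
  have hqa' : q ≠ a := hqa
  -- pair lemma
  have pair : ∀ u v : X, u ≠ v → ∃ N ∈ A.lines,
      (N = Lab ∨ N = Lcd ∨ N = Lac ∨ N = Lbd ∨ N = Lad ∨ N = Lbc ∨ N = Lpq) ∧
      u ∈ N ∧ v ∈ N := by
    intro u v huv
    rcases cover u with rfl|rfl|rfl|rfl|rfl|rfl|rfl <;>
      rcases cover v with rfl|rfl|rfl|rfl|rfl|rfl|rfl <;>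
      first
      | exact absurd rfl huv
      | (refine ⟨Lab, hLab, Or.inl rfl, ?_, ?_⟩ <;> (rw [eLab]; simp; done))
      | (refine ⟨Lcd, hLcd, Or.inr (Or.inl rfl), ?_, ?_⟩ <;> (rw [eLcd]; simp; done))
      | (refine ⟨Lac, hLac, Or.inr (Or.inr (Or.inl rfl)), ?_, ?_⟩ <;> (rw [eLac]; simp; done))
      | (refine ⟨Lbd, hLbd, Or.inr (Or.inr (Or.inr (Or.inl rfl))), ?_, ?_⟩ <;> (rw [eLbd]; simp; done))
      | (refine ⟨Lad, hLad, Or.inr (Or.inr (Or.inr (Or.inr (Or.inl rfl)))), ?_, ?_⟩ <;> (rw [eLad]; simp; done))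
      | (refine ⟨Lbc, hLbc, Or.inr (Or.inr (Or.inr (Or.inr (Or.inr (Or.inl rfl))))), ?_, ?_⟩ <;> (rw [eLbc]; simp; done))
      | (refine ⟨Lpq, hLpq, Or.inr (Or.inr (Or.inr (Or.inr (Or.inr (Or.inr rfl))))), ?_, ?_⟩ <;> (rw [eLpqr]; simp; done))
  have classify : ∀ M ∈ A.lines,
      M = Lab ∨ M = Lcd ∨ M = Lac ∨ M = Lbd ∨ M = Lad ∨ M = Lbc ∨ M = Lpq := by
    intro M hM
    have h2 : 1 < M.encard := by rw [hA.2.1 M hM]; norm_num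
    obtain ⟨u, v, hu, hv, huv⟩ := Set.one_lt_encard_iff.mp h2
    obtain ⟨N, hN, hNl, huN, hvN⟩ := pair u v huv
    have : M = N := line_unique hM hN huv hu hv huN hvN
    rw [this]
    exact hNl
  exact ⟨{
    p := p, q := q, r := r,
    Lab := Lab, Lcd := Lcd, Lac := Lac, Lbd := Lbd, Lad := Lad, Lbc := Lbc, Lpqr := Lpq,
    hLab := hLab, eLab := eLab, hLcd := hLcd, eLcd := eLcd,
    hLac := hLac, eLac := eLac, hLbd := hLbd, eLbd := eLbd,
    hLad := hLad, eLad := eLad, hLbc := hLbc, eLbc := eLbc,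
    hLpqr := hLpq, eLpqr := eLpqr,
    pa := hpa, pb := hpb, pc := hpc, pd := hpd,
    qa := hqa, qb := hqb, qc := hqc, qd := hqd,
    ra := hra, rb := hrb, rc := hrc, rd := hrd,
    pq := hpq, pr := hpr, qr := hqr,
    cover := cover, classify := classify }⟩

end Fano
namespace Fano
variable {X : Type u} {A : LinSpace X}

open Classical in
noncomputable def gmap (a b c d p q r a' b' c' d' p' q' r' : X) : X → X := fun x =>
  if x = a then a' else if x = b then b' else if x = c then c' else if x = d then d'
  else if x = p then p' else if x = q then q' else r'

lemma gmap_a (a b c d p q r a' b' c' d' p' q' r' : X) :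
    gmap a b c d p q r a' b' c' d' p' q' r' a = a' := by simp [gmap]

lemma gmap_b (a b c d p q r a' b' c' d' p' q' r' : X) (hab : a ≠ b) :
    gmap a b c d p q r a' b' c' d' p' q' r' b = b' := by
  simp [gmap, Ne.symm hab]

lemma gmap_c (a b c d p q r a' b' c' d' p' q' r' : X) (hac : a ≠ c) (hbc : b ≠ c) :
    gmap a b c d p q r a' b' c' d' p' q' r' c = c' := by
  simp [gmap, Ne.symm hac, Ne.symm hbc]

lemma gmap_d (a b c d p q r a' b' c' d' p' q' r' : X) (had : a ≠ d) (hbd : b ≠ d) (hcd : c ≠ d) :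
    gmap a b c d p q r a' b' c' d' p' q' r' d = d' := by
  simp [gmap, Ne.symm had, Ne.symm hbd, Ne.symm hcd]

lemma gmap_p (a b c d p q r a' b' c' d' p' q' r' : X) (pa : p ≠ a) (pb : p ≠ b) (pc : p ≠ c)
    (pd : p ≠ d) : gmap a b c d p q r a' b' c' d' p' q' r' p = p' := by
  simp [gmap, pa, pb, pc, pd]

lemma gmap_q (a b c d p q r a' b' c' d' p' q' r' : X) (qa : q ≠ a) (qb : q ≠ b) (qc : q ≠ c)
    (qd : q ≠ d) (pq : p ≠ q) : gmap a b c d p q r a' b' c' d' p' q' r' q = q' := by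
  simp [gmap, qa, qb, qc, qd, Ne.symm pq]

lemma gmap_r (a b c d p q r a' b' c' d' p' q' r' : X) (ra : r ≠ a) (rb : r ≠ b) (rc : r ≠ c)
    (rd : r ≠ d) (pr : p ≠ r) (qr : q ≠ r) :
    gmap a b c d p q r a' b' c' d' p' q' r' r = r' := by
  simp [gmap, ra, rb, rc, rd, Ne.symm pr, Ne.symm qr]


/-- the canonical map associated to two coordinatisations -/
noncomputable def cmap {a b c d : X} (C : Coord A a b c d) {a' b' c' d' : X}
    (C' : Coord A a' b' c' d') : X → X :=
  gmap a b c d C.p C.q C.r a' b' c' d' C'.p C'.q C'.r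

lemma cmap_vals {a b c d : X} {C : Coord A a b c d} {a' b' c' d' : X}
    {C' : Coord A a' b' c' d'} (hfr : Fr A a b c d) :
    cmap C C' a = a' ∧ cmap C C' b = b' ∧ cmap C C' c = c' ∧ cmap C C' d = d' ∧
    cmap C C' C.p = C'.p ∧ cmap C C' C.q = C'.q ∧ cmap C C' C.r = C'.r := by
  obtain ⟨hab, hac, had, hbc, hbd, hcd, -⟩ := hfr
  exact ⟨gmap_a _ _ _ _ _ _ _ _ _ _ _ _ _ _, gmap_b _ _ _ _ _ _ _ _ _ _ _ _ _ _ hab,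
    gmap_c _ _ _ _ _ _ _ _ _ _ _ _ _ _ hac hbc,
    gmap_d _ _ _ _ _ _ _ _ _ _ _ _ _ _ had hbd hcd,
    gmap_p _ _ _ _ _ _ _ _ _ _ _ _ _ _ C.pa C.pb C.pc C.pd,
    gmap_q _ _ _ _ _ _ _ _ _ _ _ _ _ _ C.qa C.qb C.qc C.qd C.pq,
    gmap_r _ _ _ _ _ _ _ _ _ _ _ _ _ _ C.ra C.rb C.rc C.rd C.pr C.qr⟩

lemma cmap_col {a b c d : X} {C : Coord A a b c d} {a' b' c' d' : X}
    {C' : Coord A a' b' c' d'} (hfr : Fr A a b c d) {x y z : X}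
    (h : Collin A x y z) : Collin A (cmap C C' x) (cmap C C' y) (cmap C C' z) := by
  obtain ⟨va, vb, vc, vd, vp, vq, vr⟩ := cmap_vals (C := C) (C' := C') hfr
  obtain ⟨M, hM, hxM, hyM, hzM⟩ := h
  have key : ∀ N N' : Set X, N' ∈ A.lines → ∀ s1 s2 s3 t1 t2 t3 : X,
      N = {s1, s2, s3} → N' = {t1, t2, t3} →
      cmap C C' s1 = t1 → cmap C C' s2 = t2 → cmap C C' s3 = t3 →
      x ∈ N → y ∈ N → z ∈ N →
      Collin A (cmap C C' x) (cmap C C' y) (cmap C C' z) := by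
    intro N N' hN' s1 s2 s3 t1 t2 t3 eN eN' e1 e2 e3 hx hy hz
    have hm : ∀ w, w ∈ N → cmap C C' w ∈ N' := by
      intro w hw
      rw [eN] at hw
      rcases hw with rfl|rfl|rfl <;> rw [eN'] <;> simp [e1, e2, e3]
    exact col_of_line hN' (hm x hx) (hm y hy) (hm z hz)
  rcases C.classify M hM with rfl|rfl|rfl|rfl|rfl|rfl|rfl
  · exact key _ _ C'.hLab _ _ _ _ _ _ C.eLab C'.eLab va vb vp hxM hyM hzM
  · exact key _ _ C'.hLcd _ _ _ _ _ _ C.eLcd C'.eLcd vc vd vp hxM hyM hzM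
  · exact key _ _ C'.hLac _ _ _ _ _ _ C.eLac C'.eLac va vc vq hxM hyM hzM
  · exact key _ _ C'.hLbd _ _ _ _ _ _ C.eLbd C'.eLbd vb vd vq hxM hyM hzM
  · exact key _ _ C'.hLad _ _ _ _ _ _ C.eLad C'.eLad va vd vr hxM hyM hzM
  · exact key _ _ C'.hLbc _ _ _ _ _ _ C.eLbc C'.eLbc vb vc vr hxM hyM hzM
  · exact key _ _ C'.hLpqr _ _ _ _ _ _ C.eLpqr C'.eLpqr vp vq vr hxM hyM hzM

lemma cmap_inv {a b c d : X} {C : Coord A a b c d} {a' b' c' d' : X}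
    {C' : Coord A a' b' c' d'} (hfr : Fr A a b c d) (hfr' : Fr A a' b' c' d') :
    ∀ x, cmap C' C (cmap C C' x) = x := by
  obtain ⟨va, vb, vc, vd, vp, vq, vr⟩ := cmap_vals (C := C) (C' := C') hfr
  obtain ⟨wa, wb, wc, wd, wp, wq, wr⟩ := cmap_vals (C := C') (C' := C) hfr'
  intro x
  rcases C.cover x with rfl|rfl|rfl|rfl|rfl|rfl|rfl
  · rw [va, wa]
  · rw [vb, wb]
  · rw [vc, wc]
  · rw [vd, wd]
  · rw [vp, wp]
  · rw [vq, wq]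
  · rw [vr, wr]

/-- main lemma for the case where the domain contains a frame -/
lemma frame_case (hA : IsFano A) {S : Set X} {f : X → X} (hP : PIso A S f)
    {a b c d : X} (ha : a ∈ S) (hb : b ∈ S) (hc : c ∈ S) (hd : d ∈ S)
    (hfr : Fr A a b c d) :
    ∃ g : X → X, IsAuto A g ∧ ∀ x ∈ S, g x = f x := by
  obtain ⟨hab, hac, had, hbc, hbd, hcd, nc⟩ := hfr
  have hfr : Fr A a b c d := ⟨hab, hac, had, hbc, hbd, hcd, nc⟩
  -- the image frame
  have hab' : f a ≠ f b := fun h => hab (hP.1 ha hb h)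
  have hac' : f a ≠ f c := fun h => hac (hP.1 ha hc h)
  have had' : f a ≠ f d := fun h => had (hP.1 ha hd h)
  have hbc' : f b ≠ f c := fun h => hbc (hP.1 hb hc h)
  have hbd' : f b ≠ f d := fun h => hbd (hP.1 hb hd h)
  have hcd' : f c ≠ f d := fun h => hcd (hP.1 hc hd h)
  have hfr' : Fr A (f a) (f b) (f c) (f d) := by
    refine frame_of hab' hac' had' hbc' hbd' hcd' ?_ ?_ ?_ ?_
    · exact fun h => (nc a b c (by simp) (by simp) (by simp) hab hac hbc)
        ((hP.2 a ha b hb c hc).mpr h)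
    · exact fun h => (nc a b d (by simp) (by simp) (by simp) hab had hbd)
        ((hP.2 a ha b hb d hd).mpr h)
    · exact fun h => (nc a c d (by simp) (by simp) (by simp) hac had hcd)
        ((hP.2 a ha c hc d hd).mpr h)
    · exact fun h => (nc b c d (by simp) (by simp) (by simp) hbc hbd hcd)
        ((hP.2 b hb c hc d hd).mpr h)
  obtain ⟨C⟩ := exists_coord hA hfr
  obtain ⟨C'⟩ := exists_coord hA hfr'
  obtain ⟨va, vb, vc, vd, vp, vq, vr⟩ := cmap_vals (C := C) (C' := C') hfr
  refine ⟨cmap C C', ⟨?_, ?_⟩, ?_⟩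
  · constructor
    · exact Function.LeftInverse.injective (cmap_inv hfr hfr')
    · intro y
      exact ⟨cmap C' C y, cmap_inv hfr' hfr y⟩
  · intro x y z
    constructor
    · exact cmap_col hfr
    · intro h
      have := cmap_col (C := C') (C' := C) hfr' h
      rwa [cmap_inv hfr hfr', cmap_inv hfr hfr', cmap_inv hfr hfr'] at this
  · -- agreement with f on S
    intro x hx
    rcases C.cover x with rfl|rfl|rfl|rfl|rfl|rfl|rfl
    · rw [va]
    · rw [vb]
    · rw [vc]
    · rw [vd]
    · -- x = C.p : f C.p is the third point of the line through f a, f b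
      rw [vp]
      have hcol : Collin A C.p a b := by
        refine col_of_line C.hLab ?_ ?_ ?_ <;> rw [C.eLab] <;> simp
      have hcol' : Collin A (f C.p) (f a) (f b) := (hP.2 C.p hx a ha b hb).mp hcol
      obtain ⟨M, hM, h1, h2, h3⟩ := hcol'
      have hM' : M = C'.Lab := by
        refine line_unique hM C'.hLab hab' h2 h3 ?_ ?_ <;> rw [C'.eLab] <;> simp
      rw [hM', C'.eLab] at h1
      rcases h1 with h1|h1|h1
      · exact absurd (hP.1 hx ha h1) C.pa
      · exact absurd (hP.1 hx hb h1) C.pb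
      · exact h1.symm
    · rw [vq]
      have hcol : Collin A C.q a c := by
        refine col_of_line C.hLac ?_ ?_ ?_ <;> rw [C.eLac] <;> simp
      have hcol' : Collin A (f C.q) (f a) (f c) := (hP.2 C.q hx a ha c hc).mp hcol
      obtain ⟨M, hM, h1, h2, h3⟩ := hcol'
      have hM' : M = C'.Lac := by
        refine line_unique hM C'.hLac hac' h2 h3 ?_ ?_ <;> rw [C'.eLac] <;> simp
      rw [hM', C'.eLac] at h1
      rcases h1 with h1|h1|h1
      · exact absurd (hP.1 hx ha h1) C.qa
      · exact absurd (hP.1 hx hc h1) C.qc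
      · exact h1.symm
    · rw [vr]
      have hcol : Collin A C.r a d := by
        refine col_of_line C.hLad ?_ ?_ ?_ <;> rw [C.eLad] <;> simp
      have hcol' : Collin A (f C.r) (f a) (f d) := (hP.2 C.r hx a ha d hd).mp hcol
      obtain ⟨M, hM, h1, h2, h3⟩ := hcol'
      have hM' : M = C'.Lad := by
        refine line_unique hM C'.hLad had' h2 h3 ?_ ?_ <;> rw [C'.eLad] <;> simp
      rw [hM', C'.eLad] at h1
      rcases h1 with h1|h1|h1
      · exact absurd (hP.1 hx ha h1) C.ra
      · exact absurd (hP.1 hx hd h1) C.rd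
      · exact h1.symm

end Fano
namespace Fano
variable {X : Type u} {A : LinSpace X}

/-- the partial isomorphism extends to one whose domain contains a frame -/
def Done (A : LinSpace X) (S : Set X) (f : X → X) : Prop :=
  ∃ S' f', S ⊆ S' ∧ PIso A S' f' ∧ (∀ x ∈ S, f' x = f x) ∧
    ∃ a b c d, a ∈ S' ∧ b ∈ S' ∧ c ∈ S' ∧ d ∈ S' ∧ Fr A a b c d

lemma done_mono {S T : Set X} {f g : X → X} (hST : S ⊆ T) (hfg : ∀ x ∈ S, g x = f x)
    (h : Done A T g) : Done A S f := by
  obtain ⟨S', f', hsub, hP, hagree, fr⟩ := h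
  exact ⟨S', f', hST.trans hsub, hP, fun x hx => (hagree x (hST hx)).trans (hfg x hx), fr⟩

lemma from_line_pt (hA : IsFano A) {L : Set X} {a b c e : X} {f : X → X}
    (hL : L ∈ A.lines) (eL : L = {a, b, c}) (hab : a ≠ b) (hac : a ≠ c) (hbc : b ≠ c)
    (heL : e ∉ L) (hP : PIso A (insert e L) f) : Done A (insert e L) f := by
  have haL : a ∈ L := by rw [eL]; simp
  have hbL : b ∈ L := by rw [eL]; simp
  have hcL : c ∈ L := by rw [eL]; simp
  set S := insert e L with hSdef
  have haS : a ∈ S := Set.mem_insert_of_mem _ haL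
  have hbS : b ∈ S := Set.mem_insert_of_mem _ hbL
  have hcS : c ∈ S := Set.mem_insert_of_mem _ hcL
  have heS : e ∈ S := Set.mem_insert _ _
  have hea : e ≠ a := fun h => heL (h ▸ haL)
  have heb : e ≠ b := fun h => heL (h ▸ hbL)
  have hec : e ≠ c := fun h => heL (h ▸ hcL)
  -- image line L'
  have fab : f a ≠ f b := fun h => hab (hP.1 haS hbS h)
  have fac : f a ≠ f c := fun h => hac (hP.1 haS hcS h)
  have fbc : f b ≠ f c := fun h => hbc (hP.1 hbS hcS h)
  have fae : f a ≠ f e := fun h => hea (hP.1 haS heS h).symm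
  have fbe : f b ≠ f e := fun h => heb (hP.1 heS hbS h.symm)
  have fce : f c ≠ f e := fun h => hec (hP.1 heS hcS h.symm)
  obtain ⟨L', hL', haL', hbL'⟩ := A.exists_line (f a) (f b) fab
  have hfcL' : f c ∈ L' := by
    have h1 : Collin A a b c := col_of_line hL haL hbL hcL
    obtain ⟨M, hM, h2, h3, h4⟩ := (hP.2 a haS b hbS c hcS).mp h1
    rwa [line_unique hM hL' fab h2 h3 haL' hbL'] at h4
  have hfeL' : f e ∉ L' := by
    intro h'
    exact (not_col_off hL haL hbL hab heL)
      ((hP.2 e heS a haS b hbS).mpr (col_of_line hL' h' haL' hbL'))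
  -- the lines ae and (fa)(fe) and their third points
  obtain ⟨Ae, hAe, haAe, heAe⟩ := A.exists_line a e (Ne.symm hea)
  obtain ⟨t, eAe, hta, hte⟩ := third_point hA hAe haAe heAe (Ne.symm hea)
  have htAe : t ∈ Ae := by rw [eAe]; simp
  obtain ⟨Ae', hAe', haAe', heAe'⟩ := A.exists_line (f a) (f e) fae
  obtain ⟨t', eAe', ht'a, ht'e⟩ := third_point hA hAe' haAe' heAe' fae
  have ht'Ae' : t' ∈ Ae' := by rw [eAe']; simp
  have hAeL : Ae ≠ L := fun h => heL (h ▸ heAe)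
  have htL : t ∉ L := fun h => hta (inter_unique hAe hL hAeL haAe haL htAe h)
  have hAe'L' : Ae' ≠ L' := fun h => hfeL' (h ▸ heAe')
  have ht'L' : t' ∉ L' := fun h => ht'a (inter_unique hAe' hL' hAe'L' haAe' haL' ht'Ae' h)
  have htS : t ∉ S := by
    rintro (rfl|h)
    · exact hte rfl
    · exact htL h
  have hbAe : b ∉ Ae := fun h => hab (inter_unique hAe hL hAeL haAe haL h hbL).symm
  have hcAe : c ∉ Ae := fun h => hac (inter_unique hAe hL hAeL haAe haL h hcL).symm
  have hbAe' : f b ∉ Ae' := fun h =>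
    fab (inter_unique hAe' hL' hAe'L' haAe' haL' h hbL').symm
  have hcAe' : f c ∉ Ae' := fun h =>
    fac (inter_unique hAe' hL' hAe'L' haAe' haL' h hfcL').symm
  have hy : t' ∉ f '' S := by
    rintro ⟨s, hs, hfs⟩
    rcases hs with rfl|hsL
    · exact ht'e hfs.symm 
    · rw [eL] at hsL
      rcases hsL with rfl|rfl|rfl
      · exact ht'a hfs.symm
      · exact ht'L' (hfs ▸ hbL')
      · exact ht'L' (hfs ▸ hfcL')
  -- the lines be, ce and images
  obtain ⟨Be, hBe, hbBe, heBe⟩ := A.exists_line b e (Ne.symm heb)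
  have hBeAe : Be ≠ Ae := fun h => hbAe (h ▸ hbBe)
  have htBe : t ∉ Be := fun h => hte (inter_unique hBe hAe hBeAe heBe heAe h htAe)
  obtain ⟨Ce, hCe, hcCe, heCe⟩ := A.exists_line c e (Ne.symm hec)
  have hCeAe : Ce ≠ Ae := fun h => hcAe (h ▸ hcCe)
  have htCe : t ∉ Ce := fun h => hte (inter_unique hCe hAe hCeAe heCe heAe h htAe)
  obtain ⟨Be', hBe', hbBe', heBe'⟩ := A.exists_line (f b) (f e) fbe
  have hBe'Ae' : Be' ≠ Ae' := fun h => hbAe' (h ▸ hbBe')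
  have ht'Be' : t' ∉ Be' := fun h =>
    ht'e (inter_unique hBe' hAe' hBe'Ae' heBe' heAe' h ht'Ae')
  obtain ⟨Ce', hCe', hcCe', heCe'⟩ := A.exists_line (f c) (f e) fce
  have hCe'Ae' : Ce' ≠ Ae' := fun h => hcAe' (h ▸ hcCe')
  have ht'Ce' : t' ∉ Ce' := fun h =>
    ht'e (inter_unique hCe' hAe' hCe'Ae' heCe' heAe' h ht'Ae')
  -- positive and negative collinearity facts
  have posae : Collin A t a e := col_of_line hAe htAe haAe heAe
  have posae' : Collin A t' (f a) (f e) := col_of_line hAe' ht'Ae' haAe' heAe'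
  have ncab : ¬ Collin A t a b := not_col_off hL haL hbL hab htL
  have ncab' : ¬ Collin A t' (f a) (f b) := not_col_off hL' haL' hbL' fab ht'L'
  have ncac : ¬ Collin A t a c := not_col_off hL haL hcL hac htL
  have ncac' : ¬ Collin A t' (f a) (f c) := not_col_off hL' haL' hfcL' fac ht'L'
  have ncbc : ¬ Collin A t b c := not_col_off hL hbL hcL hbc htL
  have ncbc' : ¬ Collin A t' (f b) (f c) := not_col_off hL' hbL' hfcL' fbc ht'L'
  have ncbe : ¬ Collin A t b e := not_col_off hBe hbBe heBe heb.symm htBe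
  have ncbe' : ¬ Collin A t' (f b) (f e) := not_col_off hBe' hbBe' heBe' fbe ht'Be'
  have ncce : ¬ Collin A t c e := not_col_off hCe hcCe heCe hec.symm htCe
  have ncce' : ¬ Collin A t' (f c) (f e) := not_col_off hCe' hcCe' heCe' fce ht'Ce'
  -- extension
  have hpairs : ∀ s ∈ S, ∀ w ∈ S, s ≠ w → (Collin A t s w ↔ Collin A t' (f s) (f w)) := by
    intro s hs w hw hsw
    have hs' : s = e ∨ s = a ∨ s = b ∨ s = c := by
      rcases hs with rfl|h
      · exact Or.inl rfl
      · rw [eL] at h; tauto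
    have hw' : w = e ∨ w = a ∨ w = b ∨ w = c := by
      rcases hw with rfl|h
      · exact Or.inl rfl
      · rw [eL] at h; tauto
    rcases hs' with rfl|rfl|rfl|rfl <;> rcases hw' with rfl|rfl|rfl|rfl <;>
      first
      | exact absurd rfl hsw
      | exact iff_of_true posae posae'
      | exact iff_of_true (col_swap23 posae) (col_swap23 posae')
      | exact iff_of_false ncab ncab'
      | exact iff_of_false (fun h => ncab (col_swap23 h)) (fun h => ncab' (col_swap23 h))
      | exact iff_of_false ncac ncac'
      | exact iff_of_false (fun h => ncac (col_swap23 h)) (fun h => ncac' (col_swap23 h))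
      | exact iff_of_false ncbc ncbc'
      | exact iff_of_false (fun h => ncbc (col_swap23 h)) (fun h => ncbc' (col_swap23 h))
      | exact iff_of_false ncbe ncbe'
      | exact iff_of_false (fun h => ncbe (col_swap23 h)) (fun h => ncbe' (col_swap23 h))
      | exact iff_of_false ncce ncce'
      | exact iff_of_false (fun h => ncce (col_swap23 h)) (fun h => ncce' (col_swap23 h))
  obtain ⟨f₂, hP₂, hagree, hf₂t⟩ := ext_piso hA hP htS hy hpairs
  -- the frame b c e t
  have hbt : b ≠ t := fun h => htL (h ▸ hbL)
  have hct : c ≠ t := fun h => htL (h ▸ hcL)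
  have hfr : Fr A b c e t := by
    refine frame_of hbc heb.symm hbt hec.symm hct (Ne.symm hte) ?_ ?_ ?_ ?_
    · exact fun h => (not_col_off hL hbL hcL hbc heL) (col_rot (col_rot h))
    · exact fun h => (not_col_off hL hbL hcL hbc htL) (col_rot (col_rot h))
    · exact fun h => ncbe (col_rot (col_rot h))
    · exact fun h => ncce (col_rot (col_rot h))
  exact ⟨insert t S, f₂, Set.subset_insert _ _, hP₂, hagree, b, c, e, t,
    Set.mem_insert_of_mem _ hbS, Set.mem_insert_of_mem _ hcS,
    Set.mem_insert_of_mem _ heS, Set.mem_insert _ _, hfr⟩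

end Fano
namespace Fano
variable {X : Type u} {A : LinSpace X}

lemma from_full_line (hA : IsFano A) {L : Set X} {a b c : X} {f : X → X}
    (hL : L ∈ A.lines) (eL : L = {a, b, c}) (hab : a ≠ b) (hac : a ≠ c) (hbc : b ≠ c)
    (hP : PIso A L f) : Done A L f := by
  have haL : a ∈ L := by rw [eL]; simp
  have hbL : b ∈ L := by rw [eL]; simp
  have hcL : c ∈ L := by rw [eL]; simp
  have fab : f a ≠ f b := fun h => hab (hP.1 haL hbL h)
  obtain ⟨L', hL', haL', hbL'⟩ := A.exists_line (f a) (f b) fab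
  have hfcL' : f c ∈ L' := by
    have h1 : Collin A a b c := col_of_line hL haL hbL hcL
    obtain ⟨M, hM, h2, h3, h4⟩ := (hP.2 a haL b hbL c hcL).mp h1
    rwa [line_unique hM hL' fab h2 h3 haL' hbL'] at h4
  have himg : ∀ s ∈ L, f s ∈ L' := by
    intro s hs
    rw [eL] at hs
    rcases hs with rfl|rfl|rfl
    · exact haL'
    · exact hbL'
    · exact hfcL'
  obtain ⟨d, hdL⟩ := exists_not_mem_line hA hL
  obtain ⟨d', hd'L'⟩ := exists_not_mem_line hA hL'
  have hy : d' ∉ f '' L := by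
    rintro ⟨s, hs, hfs⟩
    exact hd'L' (hfs ▸ himg s hs)
  have hpairs : ∀ s ∈ L, ∀ w ∈ L, s ≠ w → (Collin A d s w ↔ Collin A d' (f s) (f w)) := by
    intro s hs w hw hsw
    exact iff_of_false (not_col_off hL hs hw hsw hdL)
      (not_col_off hL' (himg s hs) (himg w hw) (fun h => hsw (hP.1 hs hw h)) hd'L')
  obtain ⟨f₂, hP₂, hagree, hf₂d⟩ := ext_piso hA hP hdL hy hpairs
  exact done_mono (Set.subset_insert _ _) hagree (from_line_pt hA hL eL hab hac hbc hdL hP₂)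

lemma from_sub_line (hA : IsFano A) {L : Set X} {a b c : X} {S : Set X} {f : X → X}
    (hL : L ∈ A.lines) (eL : L = {a, b, c}) (hab : a ≠ b) (hac : a ≠ c) (hbc : b ≠ c)
    (ha : a ∈ S) (hb : b ∈ S) (hsub : S ⊆ L) (hP : PIso A S f) : Done A S f := by
  by_cases hc : c ∈ S
  · have eS : S = L := by
      refine Set.Subset.antisymm hsub ?_
      rw [eL]
      rintro x (rfl|rfl|rfl) <;> assumption
    rw [eS]
    exact from_full_line hA hL eL hab hac hbc (eS ▸ hP)
  · -- S = {a, b}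
    have eS : S = {a, b} := by
      refine Set.Subset.antisymm ?_ ?_
      · intro x hx
        have := hsub hx
        rw [eL] at this
        rcases this with rfl|rfl|rfl
        · exact Set.mem_insert _ _
        · exact Set.mem_insert_of_mem _ rfl
        · exact absurd hx hc
      · rintro x (rfl|rfl) <;> assumption
    have fab : f a ≠ f b := fun h => hab (hP.1 ha hb h)
    obtain ⟨L', hL', haL', hbL'⟩ := A.exists_line (f a) (f b) fab
    obtain ⟨c', eL', hc'a, hc'b⟩ := third_point hA hL' haL' hbL' fab
    have hc'L' : c' ∈ L' := by rw [eL']; simp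
    have haL : a ∈ L := by rw [eL]; simp
    have hbL : b ∈ L := by rw [eL]; simp
    have hcL : c ∈ L := by rw [eL]; simp
    have hy : c' ∉ f '' S := by
      rintro ⟨s, hs, hfs⟩
      rw [eS] at hs
      rcases hs with rfl|rfl
      · exact hc'a hfs.symm
      · exact hc'b hfs.symm
    have pos : Collin A c a b := col_of_line hL hcL haL hbL
    have pos' : Collin A c' (f a) (f b) := col_of_line hL' hc'L' haL' hbL'
    have hpairs : ∀ s ∈ S, ∀ w ∈ S, s ≠ w → (Collin A c s w ↔ Collin A c' (f s) (f w)) := by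
      intro s hs w hw hsw
      rw [eS] at hs hw
      rcases hs with rfl|rfl <;> rcases hw with rfl|rfl
      · exact absurd rfl hsw
      · exact iff_of_true pos pos'
      · exact iff_of_true (col_swap23 pos) (col_swap23 pos')
      · exact absurd rfl hsw
    obtain ⟨f₂, hP₂, hagree, hf₂c⟩ := ext_piso hA hP hc hy hpairs
    have heq : insert c S = L := by
      rw [eS, eL]
      ext x
      simp
      tauto
    have hP₃ : PIso A L f₂ := heq ▸ hP₂
    exact done_mono hsub (fun x hx => hagree x hx) (from_full_line hA hL eL hab hac hbc hP₃)

end Fano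
namespace Fano
variable {X : Type u} {A : LinSpace X}

set_option maxHeartbeats 1000000 in
lemma to_frame (hA : IsFano A) {S : Set X} {f : X → X} (hP : PIso A S f) : Done A S f := by
  by_cases hfr : ∃ a b c d, a ∈ S ∧ b ∈ S ∧ c ∈ S ∧ d ∈ S ∧ Fr A a b c d
  · obtain ⟨a, b, c, d, ha, hb, hc, hd, hF⟩ := hfr
    exact ⟨S, f, subset_rfl, hP, fun _ _ => rfl, a, b, c, d, ha, hb, hc, hd, hF⟩
  by_cases h2 : ∃ a b, a ∈ S ∧ b ∈ S ∧ a ≠ b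
  · obtain ⟨a, b, haS, hbS, hab⟩ := h2
    obtain ⟨L, hL, haL, hbL⟩ := A.exists_line a b hab
    obtain ⟨c, eL, hca, hcb⟩ := third_point hA hL haL hbL hab
    have hac : a ≠ c := Ne.symm hca
    have hbc : b ≠ c := Ne.symm hcb
    have hcL : c ∈ L := by rw [eL]; simp
    by_cases hsub : S ⊆ L
    · exact from_sub_line hA hL eL hab hac hbc haS hbS hsub hP
    · obtain ⟨e, heS, heL⟩ := Set.not_subset.mp hsub
      have hea : e ≠ a := fun h => heL (h ▸ haL)
      have heb : e ≠ b := fun h => heL (h ▸ hbL)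
      have hec : e ≠ c := fun h => heL (h ▸ hcL)
      -- the three lines through e
      obtain ⟨Ae, hAe, haAe, heAe⟩ := A.exists_line a e (Ne.symm hea)
      obtain ⟨u, eAe, hua, hue⟩ := third_point hA hAe haAe heAe (Ne.symm hea)
      have huAe : u ∈ Ae := by rw [eAe]; simp
      obtain ⟨Be, hBe, hbBe, heBe⟩ := A.exists_line b e (Ne.symm heb)
      obtain ⟨v, eBe, hvb, hve⟩ := third_point hA hBe hbBe heBe (Ne.symm heb)
      have hvBe : v ∈ Be := by rw [eBe]; simp
      obtain ⟨Ce, hCe, hcCe, heCe⟩ := A.exists_line c e (Ne.symm hec)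
      obtain ⟨w, eCe, hwc, hwe⟩ := third_point hA hCe hcCe heCe (Ne.symm hec)
      have hwCe : w ∈ Ce := by rw [eCe]; simp
      -- off-line facts
      have hAeL : Ae ≠ L := fun h => heL (h ▸ heAe)
      have hBeL : Be ≠ L := fun h => heL (h ▸ heBe)
      have hCeL : Ce ≠ L := fun h => heL (h ▸ heCe)
      have hbAe : b ∉ Ae := fun h => hab (inter_unique hAe hL hAeL haAe haL h hbL).symm
      have hcAe : c ∉ Ae := fun h => hac (inter_unique hAe hL hAeL haAe haL h hcL).symm
      have haBe : a ∉ Be := fun h => hab (inter_unique hBe hL hBeL hbBe hbL h haL)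
      have hcBe : c ∉ Be := fun h => hbc (inter_unique hBe hL hBeL hbBe hbL h hcL).symm
      have haCe : a ∉ Ce := fun h => hac (inter_unique hCe hL hCeL hcCe hcL h haL)
      have hbCe : b ∉ Ce := fun h => hbc (inter_unique hCe hL hCeL hcCe hcL h hbL)
      have hAeBe : Ae ≠ Be := fun h => hbAe (h ▸ hbBe)
      have hAeCe : Ae ≠ Ce := fun h => hcAe (h ▸ hcCe)
      have hBeCe : Be ≠ Ce := fun h => hcBe (h ▸ hcCe)
      have huL : u ∉ L := fun h => hua (inter_unique hAe hL hAeL haAe haL huAe h)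
      have hvL : v ∉ L := fun h => hvb (inter_unique hBe hL hBeL hbBe hbL hvBe h)
      have hwL : w ∉ L := fun h => hwc (inter_unique hCe hL hCeL hcCe hcL hwCe h)
      have hvAe : v ∉ Ae := fun h =>
        hve (inter_unique hBe hAe (Ne.symm hAeBe) heBe heAe hvBe h)
      have huBe : u ∉ Be := fun h => hue (inter_unique hAe hBe hAeBe heAe heBe huAe h)
      have huCe : u ∉ Ce := fun h => hue (inter_unique hAe hCe hAeCe heAe heCe huAe h)
      have hwAe : w ∉ Ae := fun h =>
        hwe (inter_unique hCe hAe (Ne.symm hAeCe) heCe heAe hwCe h)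
      have hwBe : w ∉ Be := fun h =>
        hwe (inter_unique hCe hBe (Ne.symm hBeCe) heCe heBe hwCe h)
      have hvCe : v ∉ Ce := fun h => hve (inter_unique hBe hCe hBeCe heBe heCe hvBe h)
      -- cover
      have cover7 : ∀ z : X, z = a ∨ z = b ∨ z = c ∨ z = e ∨ z = u ∨ z = v ∨ z = w := by
        intro z
        by_cases hz : z = e
        · exact Or.inr (Or.inr (Or.inr (Or.inl hz)))
        obtain ⟨M, hM, hzM, heM⟩ := A.exists_line z e hz
        obtain ⟨m, hmM, hmL⟩ := lines_meet hA hM hL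
        have hme : m ≠ e := fun h => heL (h ▸ hmL)
        rw [eL] at hmL
        rcases hmL with rfl|rfl|rfl
        · have : M = Ae := line_unique hM hAe hme hmM heM haAe heAe
          rw [this, eAe] at hzM
          rcases hzM with rfl|rfl|rfl
          · exact Or.inl rfl
          · exact Or.inr (Or.inr (Or.inr (Or.inl rfl)))
          · exact Or.inr (Or.inr (Or.inr (Or.inr (Or.inl rfl))))
        · have : M = Be := line_unique hM hBe hme hmM heM hbBe heBe
          rw [this, eBe] at hzM
          rcases hzM with rfl|rfl|rfl
          · exact Or.inr (Or.inl rfl)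
          · exact Or.inr (Or.inr (Or.inr (Or.inl rfl)))
          · exact Or.inr (Or.inr (Or.inr (Or.inr (Or.inr (Or.inl rfl)))))
        · have : M = Ce := line_unique hM hCe hme hmM heM hcCe heCe
          rw [this, eCe] at hzM
          rcases hzM with rfl|rfl|rfl
          · exact Or.inr (Or.inr (Or.inl rfl))
          · exact Or.inr (Or.inr (Or.inr (Or.inl rfl)))
          · exact Or.inr (Or.inr (Or.inr (Or.inr (Or.inr (Or.inr rfl)))))
      -- w is not in S
      have hwS : w ∉ S := by
        intro hwS
        refine hfr ⟨a, b, e, w, haS, hbS, heS, hwS, ?_⟩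
        refine frame_of hab (Ne.symm hea) (fun h => haCe (h ▸ hwCe)) (Ne.symm heb)
          (fun h => hbCe (h ▸ hwCe)) (Ne.symm hwe) ?_ ?_ ?_ ?_
        · exact fun h => (not_col_off hL haL hbL hab heL) (col_rot (col_rot h))
        · exact fun h => (not_col_off hL haL hbL hab hwL) (col_rot (col_rot h))
        · exact fun h => (not_col_off hAe haAe heAe (Ne.symm hea) hwAe) (col_rot (col_rot h))
        · exact fun h => (not_col_off hBe hbBe heBe (Ne.symm heb) hwBe) (col_rot (col_rot h))
      by_cases huS : u ∈ S
      · have hcS : c ∉ S := by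
          intro hcS
          refine hfr ⟨b, c, e, u, hbS, hcS, heS, huS, ?_⟩
          refine frame_of hbc (Ne.symm heb) (fun h => hbAe (h ▸ huAe)) (Ne.symm hec)
            (fun h => hcAe (h ▸ huAe)) (Ne.symm hue) ?_ ?_ ?_ ?_
          · exact fun h => (not_col_off hL hbL hcL hbc heL) (col_rot (col_rot h))
          · exact fun h => (not_col_off hL hbL hcL hbc huL) (col_rot (col_rot h))
          · exact not_col_off hAe heAe huAe (Ne.symm hue) hbAe
          · exact not_col_off hAe heAe huAe (Ne.symm hue) hcAe
        have hvS : v ∉ S := by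
          intro hvS
          refine hfr ⟨a, b, u, v, haS, hbS, huS, hvS, ?_⟩
          refine frame_of hab (Ne.symm hua) (fun h => haBe (h ▸ hvBe))
            (fun h => hbAe (h ▸ huAe)) (Ne.symm hvb) (fun h => hvAe (h ▸ huAe)) ?_ ?_ ?_ ?_
          · exact fun h => (not_col_off hL haL hbL hab huL) (col_rot (col_rot h))
          · exact fun h => (not_col_off hL haL hbL hab hvL) (col_rot (col_rot h))
          · exact fun h => (not_col_off hAe haAe huAe (Ne.symm hua) hvAe) (col_rot (col_rot h))
          · exact fun h => (not_col_off hBe hbBe hvBe (Ne.symm hvb) huBe) (col_swap12 h)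
        have eS : S = insert b Ae := by
          refine Set.Subset.antisymm ?_ ?_
          · intro z hz
            rcases cover7 z with rfl|rfl|rfl|rfl|rfl|rfl|rfl
            · exact Set.mem_insert_of_mem _ haAe
            · exact Set.mem_insert _ _
            · exact absurd hz hcS
            · exact Set.mem_insert_of_mem _ heAe
            · exact Set.mem_insert_of_mem _ huAe
            · exact absurd hz hvS
            · exact absurd hz hwS
          · rintro z (rfl|hz)
            · exact hbS
            · rw [eAe] at hz
              rcases hz with rfl|rfl|rfl
              · exact haS
              · exact heS
              · exact huS
        rw [eS]
        exact from_line_pt hA hAe eAe (Ne.symm hea) (Ne.symm hua) (Ne.symm hue) hbAe (eS ▸ hP)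
      · by_cases hvS : v ∈ S
        · have hcS : c ∉ S := by
            intro hcS
            refine hfr ⟨a, c, e, v, haS, hcS, heS, hvS, ?_⟩
            refine frame_of hac (Ne.symm hea) (fun h => haBe (h ▸ hvBe)) (Ne.symm hec)
              (fun h => hcBe (h ▸ hvBe)) (Ne.symm hve) ?_ ?_ ?_ ?_
            · exact fun h => (not_col_off hL haL hcL hac heL) (col_rot (col_rot h))
            · exact fun h => (not_col_off hL haL hcL hac hvL) (col_rot (col_rot h))
            · exact not_col_off hBe heBe hvBe (Ne.symm hve) haBe
            · exact not_col_off hBe heBe hvBe (Ne.symm hve) hcBe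
          have eS : S = insert a Be := by
            refine Set.Subset.antisymm ?_ ?_
            · intro z hz
              rcases cover7 z with rfl|rfl|rfl|rfl|rfl|rfl|rfl
              · exact Set.mem_insert _ _
              · exact Set.mem_insert_of_mem _ hbBe
              · exact absurd hz hcS
              · exact Set.mem_insert_of_mem _ heBe
              · exact absurd hz huS
              · exact Set.mem_insert_of_mem _ hvBe
              · exact absurd hz hwS
            · rintro z (rfl|hz)
              · exact haS
              · rw [eBe] at hz
                rcases hz with rfl|rfl|rfl
                · exact hbS
                · exact heS
                · exact hvS
          rw [eS]
          exact from_line_pt hA hBe eBe (Ne.symm heb) (Ne.symm hvb) (Ne.symm hve) haBe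
            (eS ▸ hP)
        · by_cases hcS : c ∈ S
          · have eS : S = insert e L := by
              refine Set.Subset.antisymm ?_ ?_
              · intro z hz
                rcases cover7 z with rfl|rfl|rfl|rfl|rfl|rfl|rfl
                · exact Set.mem_insert_of_mem _ haL
                · exact Set.mem_insert_of_mem _ hbL
                · exact Set.mem_insert_of_mem _ hcL
                · exact Set.mem_insert _ _
                · exact absurd hz huS
                · exact absurd hz hvS
                · exact absurd hz hwS
              · rintro z (rfl|hz)
                · exact heS
                · rw [eL] at hz
                  rcases hz with rfl|rfl|rfl
                  · exact haS
                  · exact hbS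
                  · exact hcS
            rw [eS]
            exact from_line_pt hA hL eL hab hac hbc heL (eS ▸ hP)
          · -- S = {a, b, e} : add the point c
            have eS : S = {a, b, e} := by
              refine Set.Subset.antisymm ?_ ?_
              · intro z hz
                rcases cover7 z with rfl|rfl|rfl|rfl|rfl|rfl|rfl
                · exact Set.mem_insert _ _
                · exact Set.mem_insert_of_mem _ (Set.mem_insert _ _)
                · exact absurd hz hcS
                · exact Set.mem_insert_of_mem _ (Set.mem_insert_of_mem _ rfl)
                · exact absurd hz huS
                · exact absurd hz hvS
                · exact absurd hz hwS
              · rintro z (rfl|rfl|rfl)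
                · exact haS
                · exact hbS
                · exact heS
            have fab : f a ≠ f b := fun h => hab (hP.1 haS hbS h)
            have fae : f a ≠ f e := fun h => hea (hP.1 haS heS h).symm
            have fbe : f b ≠ f e := fun h => heb (hP.1 heS hbS h.symm)
            obtain ⟨L', hL', haL', hbL'⟩ := A.exists_line (f a) (f b) fab
            obtain ⟨c', eL', hc'a, hc'b⟩ := third_point hA hL' haL' hbL' fab
            have hc'L' : c' ∈ L' := by rw [eL']; simp
            have hfeL' : f e ∉ L' := by
              intro h'
              exact (not_col_off hL haL hbL hab heL)
                ((hP.2 e heS a haS b hbS).mpr (col_of_line hL' h' haL' hbL'))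
            obtain ⟨Ae', hAe', haAe', heAe'⟩ := A.exists_line (f a) (f e) fae
            have hAe'L' : Ae' ≠ L' := fun h => hfeL' (h ▸ heAe')
            have hc'Ae' : c' ∉ Ae' := fun h =>
              hc'a (inter_unique hAe' hL' hAe'L' haAe' haL' h hc'L')
            obtain ⟨Be', hBe', hbBe', heBe'⟩ := A.exists_line (f b) (f e) fbe
            have hBe'L' : Be' ≠ L' := fun h => hfeL' (h ▸ heBe')
            have hc'Be' : c' ∉ Be' := fun h =>
              hc'b (inter_unique hBe' hL' hBe'L' hbBe' hbL' h hc'L')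
            have hcS' : c ∉ S := hcS
            have hy : c' ∉ f '' S := by
              rintro ⟨s, hs, hfs⟩
              rw [eS] at hs
              rcases hs with rfl|rfl|rfl
              · exact hc'a hfs.symm
              · exact hc'b hfs.symm
              · exact hfeL' (hfs ▸ hc'L')
            have pos : Collin A c a b := col_of_line hL hcL haL hbL
            have pos' : Collin A c' (f a) (f b) := col_of_line hL' hc'L' haL' hbL'
            have ncae : ¬ Collin A c a e := not_col_off hAe haAe heAe (Ne.symm hea) hcAe
            have ncae' : ¬ Collin A c' (f a) (f e) :=
              not_col_off hAe' haAe' heAe' fae hc'Ae'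
            have ncbe : ¬ Collin A c b e := not_col_off hBe hbBe heBe (Ne.symm heb) hcBe
            have ncbe' : ¬ Collin A c' (f b) (f e) :=
              not_col_off hBe' hbBe' heBe' fbe hc'Be'
            have hpairs : ∀ s ∈ S, ∀ w ∈ S, s ≠ w →
                (Collin A c s w ↔ Collin A c' (f s) (f w)) := by
              intro s hs w hw hsw
              rw [eS] at hs hw
              rcases hs with rfl|rfl|rfl <;> rcases hw with rfl|rfl|rfl <;>
                first
                | exact absurd rfl hsw
                | exact iff_of_true pos pos'
                | exact iff_of_true (col_swap23 pos) (col_swap23 pos')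
                | exact iff_of_false ncae ncae'
                | exact iff_of_false (fun h => ncae (col_swap23 h))
                    (fun h => ncae' (col_swap23 h))
                | exact iff_of_false ncbe ncbe'
                | exact iff_of_false (fun h => ncbe (col_swap23 h))
                    (fun h => ncbe' (col_swap23 h))
            obtain ⟨f₂, hP₂, hagree, hf₂c⟩ := ext_piso hA hP hcS' hy hpairs
            have heq : insert c S = insert e L := by
              rw [eS, eL]
              ext x
              simp
              tauto
            have hP₃ : PIso A (insert e L) f₂ := heq ▸ hP₂
            refine done_mono ?_ hagree (from_line_pt hA hL eL hab hac hbc heL hP₃)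
            intro z hz
            rw [eS] at hz
            rcases hz with rfl|rfl|rfl
            · exact Set.mem_insert_of_mem _ haL
            · exact Set.mem_insert_of_mem _ hbL
            · exact Set.mem_insert _ _
  · -- S has at most one point
    rcases Set.eq_empty_or_nonempty S with rfl | ⟨s, hs⟩
    · have hX : (univ : Set X).Nonempty := by
        rw [Set.nonempty_iff_ne_empty]
        intro h
        have h7 := hA.2.2
        rw [h, Set.encard_empty] at h7
        norm_num at h7
      obtain ⟨x0, -⟩ := hX
      have hP0 : PIso A (∅ : Set X) f :=
        ⟨fun x hx => absurd hx (Set.notMem_empty x),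
         fun x hx => absurd hx (Set.notMem_empty x)⟩
      have hy0 : x0 ∉ f '' (∅ : Set X) := by simp
      obtain ⟨f₁, hP₁, hag₁, -⟩ := ext_piso hA hP0 (Set.notMem_empty x0) hy0
        (fun s hs => absurd hs (Set.notMem_empty s))
      obtain ⟨x1, hx1⟩ := exists_ne' hA x0
      obtain ⟨y1, hy1⟩ := exists_ne' hA (f₁ x0)
      have hx1' : x1 ∉ insert x0 (∅ : Set X) := by simp [hx1]
      have hy1' : y1 ∉ f₁ '' insert x0 (∅ : Set X) := by
        rintro ⟨s, hs, hfs⟩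
        simp only [Set.mem_insert_iff, Set.mem_empty_iff_false, or_false] at hs
        subst hs
        exact hy1 hfs.symm
      have hpairs : ∀ s ∈ insert x0 (∅ : Set X), ∀ w ∈ insert x0 (∅ : Set X), s ≠ w →
          (Collin A x1 s w ↔ Collin A y1 (f₁ s) (f₁ w)) := by
        intro s hs w hw hsw
        simp only [Set.mem_insert_iff, Set.mem_empty_iff_false, or_false] at hs hw
        exact absurd (hs.trans hw.symm) hsw
      obtain ⟨f₂, hP₂, hag₂, -⟩ := ext_piso hA hP₁ hx1' hy1' hpairs
      obtain ⟨L0, hL0, hx0L, hx1L⟩ := A.exists_line x0 x1 (Ne.symm hx1)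
      obtain ⟨c0, eL0, hc0a, hc0b⟩ := third_point hA hL0 hx0L hx1L (Ne.symm hx1)
      have hsub0 : insert x1 (insert x0 (∅ : Set X)) ⊆ L0 := by
        rintro z (rfl|hz)
        · exact hx1L
        · simp only [Set.mem_insert_iff, Set.mem_empty_iff_false, or_false] at hz
          subst hz
          exact hx0L
      have hdone := from_sub_line hA hL0 eL0 (Ne.symm hx1) (Ne.symm hc0a) (Ne.symm hc0b)
        (Set.mem_insert_of_mem _ (Set.mem_insert _ _)) (Set.mem_insert _ _) hsub0 hP₂
      exact done_mono (Set.empty_subset _) (fun x hx => absurd hx (Set.notMem_empty x))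
        hdone
    · have hone : ∀ x ∈ S, x = s := by
        intro x hx
        by_contra hne
        exact h2 ⟨x, s, hx, hs, hne⟩
      obtain ⟨b0, hb0⟩ := exists_ne' hA s
      obtain ⟨y0, hy0⟩ := exists_ne' hA (f s)
      have hb0S : b0 ∉ S := fun h => hb0 (hone b0 h)
      have hy0S : y0 ∉ f '' S := by
        rintro ⟨x, hx, hfx⟩
        rw [hone x hx] at hfx
        exact hy0 hfx.symm
      have hpairs : ∀ p ∈ S, ∀ q ∈ S, p ≠ q →
          (Collin A b0 p q ↔ Collin A y0 (f p) (f q)) :=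
        fun p hp q hq hpq => absurd ((hone p hp).trans (hone q hq).symm) hpq
      obtain ⟨f₁, hP₁, hag₁, -⟩ := ext_piso hA hP hb0S hy0S hpairs
      obtain ⟨L0, hL0, hsL0, hb0L0⟩ := A.exists_line s b0 (Ne.symm hb0)
      obtain ⟨c0, eL0, hc0a, hc0b⟩ := third_point hA hL0 hsL0 hb0L0 (Ne.symm hb0)
      have hsub0 : insert b0 S ⊆ L0 := by
        rintro z (rfl|hz)
        · exact hb0L0
        · rw [hone z hz]
          exact hsL0
      have hdone := from_sub_line hA hL0 eL0 (Ne.symm hb0) (Ne.symm hc0a) (Ne.symm hc0b)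
        (Set.mem_insert_of_mem _ hs) (Set.mem_insert _ _) hsub0 hP₁
      exact done_mono (Set.subset_insert _ _) hag₁ hdone

end Fano

/-- The Fano plane (the unique projective plane of order 2, with 7 points and
lines of 3 points each) is homogeneous. -/
theorem stmt5 {X : Type u} (A : LinSpace X) (hA : IsFano A) :
    Homogeneous A := by
  intro S _ f hinj hcol
  obtain ⟨S', f', hsub, hP', hagree, a, b, c, d, ha, hb, hc, hd, hfr⟩ :=
    Fano.to_frame hA ⟨hinj, hcol⟩
  obtain ⟨g, hg, hge⟩ := Fano.frame_case hA hP' ha hb hc hd hfr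
  exact ⟨g, hg, fun x hx => (hge x (hsub hx)).trans (hagree x hx)⟩
end
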